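/- arXiv:1704.05254 — 3 statements merged into one kernel-verified Lean document; each statement's English description precedes it below -/
import Mathlib

section
/- Let G be a tree-generating SL-HR grammar. Then for every nonterminal A of G, the line-structure ls(A) = ls(rhs(A)) is a rooted forest: it is an acyclic directed graph in which every node has in-degree at most one. -/
open scoped Classical

/-- A hypergraph over a label type `L`: nodes and edges are natural-number
identifiers, `att` gives the attachment sequence of an edge, `lab` its label,
and `ext` is the sequence of external nodes. -/
structure HGraph (L : Type) where
  V : Finset ℕ
  E : Finset ℕ
  att : ℕ → List ℕ
  lab : ℕ → L
  ext : List ℕ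

namespace HGraph

variable {L : Type}

/-- Well-formedness of a hypergraph over a ranked alphabet `rk`:
nodes nonempty, attachments are nonempty repetition-free sequences of nodes
whose length is the rank of the label, and the external nodes form a
repetition-free sequence of nodes. -/
def WF (rk : L → ℕ) (g : HGraph L) : Prop :=
  g.V.Nonempty ∧
    (∀ e ∈ g.E, (∀ v ∈ g.att e, v ∈ g.V) ∧ (g.att e).Nodup ∧
      (g.att e).length = rk (g.lab e) ∧ g.att e ≠ []) ∧
    (∀ v ∈ g.ext, v ∈ g.V) ∧ g.ext.Nodup

/-- The edge size `|g|_E`: simple edges (rank ≤ 2) count 1, a hyperedge of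
rank `n > 2` counts `n`. -/
def esize (g : HGraph L) : ℕ :=
  ∑ e ∈ g.E, (if (g.att e).length ≤ 2 then 1 else (g.att e).length)

/-- The size `|g| = |g|_V + |g|_E`. -/
def size (g : HGraph L) : ℕ := g.V.card + g.esize

/-- Isomorphism of hypergraphs: bijections on nodes and edges preserving
attachment, labels and external nodes. -/
def Isomorphic (g h : HGraph L) : Prop :=
  ∃ f fe : ℕ → ℕ,
    Set.BijOn f ↑g.V ↑h.V ∧ Set.BijOn fe ↑g.E ↑h.E ∧
    (∀ e ∈ g.E, h.att (fe e) = (g.att e).map f) ∧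
    (∀ e ∈ g.E, h.lab (fe e) = g.lab e) ∧
    h.ext = g.ext.map f

end HGraph

/-- `IsReplacement g e₀ h g'` holds if `g'` is (a realization of) the
replacement `g[e₀/h]`: the edge `e₀` is removed from `g`, a disjoint copy of
`h` (renamed via `ρ` on nodes and `η` on edges) is adjoined, and the i-th
external node of `h` is identified with the i-th attachment node of `e₀`. -/
def IsReplacement {L : Type} (g : HGraph L) (e₀ : ℕ) (h : HGraph L)
    (g' : HGraph L) : Prop :=
  ∃ ρ η : ℕ → ℕ,
    Set.InjOn ρ ↑h.V ∧ Set.InjOn η ↑h.E ∧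
    (∀ v ∈ h.V, v ∉ h.ext → ρ v ∉ g.V) ∧
    h.ext.map ρ = g.att e₀ ∧
    (∀ e ∈ h.E, η e ∉ g.E) ∧
    g'.V = g.V ∪ h.V.image ρ ∧
    g'.E = g.E.erase e₀ ∪ h.E.image η ∧
    (∀ e ∈ g.E.erase e₀, g'.att e = g.att e ∧ g'.lab e = g.lab e) ∧
    (∀ e ∈ h.E, g'.att (η e) = (h.att e).map ρ ∧ g'.lab (η e) = h.lab e) ∧
    g'.ext = g.ext

/-- An HR grammar over a terminal alphabet `T`: nonterminals are natural
numbers (`NT`), `rkN` gives their ranks, `rhs` the unique right-hand side of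
each nonterminal, and `S` is the start graph.  Labels of graphs occurring in
the grammar are `T ⊕ ℕ` (terminals on the left, nonterminals on the right). -/
structure HRGrammar (T : Type) where
  NT : Finset ℕ
  rkN : ℕ → ℕ
  rhs : ℕ → HGraph (T ⊕ ℕ)
  S : HGraph (T ⊕ ℕ)

namespace HRGrammar

variable {T : Type}

/-- The rank function on labels `T ⊕ ℕ` induced by terminal ranks `rkT`. -/
def rk (G : HRGrammar T) (rkT : T → ℕ) : T ⊕ ℕ → ℕ := Sum.elim rkT G.rkN

/-- Well-formedness of an HR grammar over ranked alphabet `rkT`: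
all ranks are ≥ 1, the start graph and all right-hand sides are well-formed,
`rank(A) = rank(rhs A)` for all nonterminals, and all nonterminal labels
occurring in the grammar are declared nonterminals. -/
def WF (G : HRGrammar T) (rkT : T → ℕ) : Prop :=
  (∀ a : T, 1 ≤ rkT a) ∧ (∀ A ∈ G.NT, 1 ≤ G.rkN A) ∧
    G.S.WF (G.rk rkT) ∧
    (∀ A ∈ G.NT, (G.rhs A).WF (G.rk rkT) ∧ (G.rhs A).ext.length = G.rkN A) ∧
    (∀ e ∈ G.S.E, ∀ B : ℕ, G.S.lab e = Sum.inr B → B ∈ G.NT) ∧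
    (∀ A ∈ G.NT, ∀ e ∈ (G.rhs A).E, ∀ B : ℕ, (G.rhs A).lab e = Sum.inr B → B ∈ G.NT)

/-- The dependency relation: `dep G A B` iff a `B`-labeled edge occurs in
`rhs(A)`. -/
def dep (G : HRGrammar T) (A B : ℕ) : Prop :=
  A ∈ G.NT ∧ B ∈ G.NT ∧ ∃ e ∈ (G.rhs A).E, (G.rhs A).lab e = Sum.inr B

/-- Straight-line condition: the dependency relation is acyclic, and every
nonterminal occurs in some derivation from the start graph (i.e., it is
reachable, via dependencies, from a nonterminal occurring in `S`).  (Every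
nonterminal has exactly one rule by construction, since `rhs` is a
function.) -/
def SL (G : HRGrammar T) : Prop :=
  (∀ A : ℕ, ¬ Relation.TransGen G.dep A A) ∧
    (∀ A ∈ G.NT, ∃ B : ℕ, (∃ e ∈ G.S.E, G.S.lab e = Sum.inr B) ∧
      Relation.ReflTransGen G.dep B A)

/-- One derivation step: replace some nonterminal edge by its right-hand
side. -/
def Derive (G : HRGrammar T) (g g' : HGraph (T ⊕ ℕ)) : Prop :=
  ∃ e ∈ g.E, ∃ A ∈ G.NT, g.lab e = Sum.inr A ∧ IsReplacement g e (G.rhs A) g'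

/-- A graph is terminal if all its edge labels are terminal symbols. -/
def Terminal (g : HGraph (T ⊕ ℕ)) : Prop :=
  ∀ e ∈ g.E, ∃ a : T, g.lab e = Sum.inl a

/-- The language of the grammar: all terminal graphs derivable from `S`. -/
def Lang (G : HRGrammar T) : Set (HGraph (T ⊕ ℕ)) :=
  { g | Relation.ReflTransGen G.Derive G.S g ∧ Terminal g }

/-- The size `|G| = |S| + Σ_{(A,g) ∈ P} |g|`. -/
def size (G : HRGrammar T) : ℕ :=
  G.S.size + ∑ A ∈ G.NT, (G.rhs A).size

end HRGrammar

/-- A ranked ordered tree given by its finite set `D` of Dewey addresses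
(children of `u` are `u ++ [1], …, u ++ [m]`) together with a labeling of the
addresses. -/
structure RankedTree (L : Type) where
  D : Finset (List ℕ)
  lab : List ℕ → L

namespace RankedTree

variable {L : Type}

/-- Well-formedness of a ranked tree relative to the (hypergraph) rank
function `rk` on labels: a symbol of rank `m + 1` has exactly `m` children
(a tree node labeled `σ` has children `1, …, rk σ - 1`). -/
def WF (rk : L → ℕ) (t : RankedTree L) : Prop :=
  [] ∈ t.D ∧
    (∀ (u : List ℕ) (i : ℕ), u ++ [i] ∈ t.D →
      u ∈ t.D ∧ 1 ≤ i ∧ i ≤ rk (t.lab u) - 1) ∧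
    (∀ u ∈ t.D, ∀ i : ℕ, 1 ≤ i → i ≤ rk (t.lab u) - 1 → u ++ [i] ∈ t.D)

/-- The preorder (lexicographic) position of an address among the addresses
of the tree. -/
noncomputable def pos (t : RankedTree L) (u : List ℕ) : ℕ :=
  (t.D.filter fun v => List.Lex (· < ·) v u).card

end RankedTree

/-- `IsTGraphOf rk t g` holds if `g` is the tree-graph `t-graph(t)`: one node
per tree node (numbered in preorder), one hyperedge per tree node, labeled by
the node's symbol and attached first to the node itself and then to its
children in order, the root being the unique external node. -/
def IsTGraphOf {L : Type} (rk : L → ℕ) (t : RankedTree L) (g : HGraph L) : Prop :=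
  g.V = Finset.range t.D.card ∧ g.E = Finset.range t.D.card ∧
    (∀ u ∈ t.D,
      g.att (t.pos u) =
        t.pos u :: (List.range (rk (t.lab u) - 1)).map (fun j => t.pos (u ++ [j + 1])) ∧
      g.lab (t.pos u) = t.lab u) ∧
    g.ext = [t.pos []]

/-- A hypergraph is a tree-graph if it is (isomorphic to) `t-graph(t)` for
some well-formed ranked tree `t`. -/
def IsTreeGraph {L : Type} (rk : L → ℕ) (g : HGraph L) : Prop :=
  ∃ t : RankedTree L, t.WF rk ∧
    ∃ g₀ : HGraph L, IsTGraphOf rk t g₀ ∧ g.Isomorphic g₀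

namespace HGraph

variable {L : Type}

/-- A path from `s` to `t` in a hypergraph: a nonempty sequence of edges,
each edge directed from its first attachment node to its remaining attachment
nodes, starting at `s` and ending at `t`. -/
def IsPath (g : HGraph L) (p : List ℕ) (s t : ℕ) : Prop :=
  p ≠ [] ∧ (∀ e ∈ p, e ∈ g.E) ∧
    (∃ e, p.head? = some e ∧ (g.att e).head? = some s) ∧
    List.Chain' (fun e e' => ∃ v, (g.att e').head? = some v ∧ v ∈ (g.att e).tail) p ∧
    (∃ e, p.getLast? = some e ∧ t ∈ (g.att e).tail)

/-- `t` is reachable from `s`: either `t = s` or there is a path. -/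
def Reaches (g : HGraph L) (s t : ℕ) : Prop :=
  s = t ∨ ∃ p : List ℕ, g.IsPath p s t

/-- An internal path: all nodes on it (the first attachment nodes of its
second, …, last edge) are internal. -/
def InternalPath (g : HGraph L) (p : List ℕ) (s t : ℕ) : Prop :=
  g.IsPath p s t ∧ ∀ e ∈ p.tail, ∀ v : ℕ, (g.att e).head? = some v → v ∉ g.ext

end HGraph

/-- The line-structure relation `ls(A)` of a nonterminal `A`: on the external
nodes of `rhs(A)`, with an edge from `u` to `v` iff there is an internal path
from `u` to `v` in `val(rhs A)` (i.e., in some terminal graph derived from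
`rhs(A)`). -/
def lsRel {T : Type} (G : HRGrammar T) (A : ℕ) (u v : ℕ) : Prop :=
  u ∈ (G.rhs A).ext ∧ v ∈ (G.rhs A).ext ∧
    ∃ h : HGraph (T ⊕ ℕ),
      Relation.ReflTransGen G.Derive (G.rhs A) h ∧ HRGrammar.Terminal h ∧
        ∃ p : List ℕ, h.InternalPath p u v
namespace S4
open HGraph HRGrammar Relation

variable {T : Type} {L : Type}

lemma not_mem_of_sup_lt {s : Finset ℕ} {x : ℕ} (h : s.sup id < x) : x ∉ s :=
  fun hx => by have := Finset.le_sup (f := id) hx; simp only [id] at this; omega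

/-- Replacement spec with explicit renaming data (same body as `IsReplacement`). -/
def RSpec (g : HGraph L) (e₀ : ℕ) (h g' : HGraph L) (ρ η : ℕ → ℕ) : Prop :=
  Set.InjOn ρ ↑h.V ∧ Set.InjOn η ↑h.E ∧
    (∀ v ∈ h.V, v ∉ h.ext → ρ v ∉ g.V) ∧
    h.ext.map ρ = g.att e₀ ∧
    (∀ e ∈ h.E, η e ∉ g.E) ∧
    g'.V = g.V ∪ h.V.image ρ ∧
    g'.E = g.E.erase e₀ ∪ h.E.image η ∧
    (∀ e ∈ g.E.erase e₀, g'.att e = g.att e ∧ g'.lab e = g.lab e) ∧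
    (∀ e ∈ h.E, g'.att (η e) = (h.att e).map ρ ∧ g'.lab (η e) = h.lab e) ∧
    g'.ext = g.ext

lemma isReplacement_iff {g : HGraph L} {e₀ : ℕ} {h g' : HGraph L} :
    IsReplacement g e₀ h g' ↔ ∃ ρ η, RSpec g e₀ h g' ρ η := Iff.rfl

/-- The canonical replacement graph. -/
noncomputable def repl (g : HGraph L) (e₀ : ℕ) (h : HGraph L) (ρ η : ℕ → ℕ) :
    HGraph L where
  V := g.V ∪ h.V.image ρ
  E := g.E.erase e₀ ∪ h.E.image η
  att := fun e => if e ∈ h.E.image η then (h.att (Function.invFunOn η ↑h.E e)).map ρ else g.att e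
  lab := fun e => if e ∈ h.E.image η then h.lab (Function.invFunOn η ↑h.E e) else g.lab e
  ext := g.ext

lemma repl_rspec {g : HGraph L} {e₀ : ℕ} {h : HGraph L} {ρ η : ℕ → ℕ}
    (h1 : Set.InjOn ρ ↑h.V) (h2 : Set.InjOn η ↑h.E)
    (h3 : ∀ v ∈ h.V, v ∉ h.ext → ρ v ∉ g.V)
    (h4 : h.ext.map ρ = g.att e₀)
    (h5 : ∀ e ∈ h.E, η e ∉ g.E) :
    RSpec g e₀ h (repl g e₀ h ρ η) ρ η := by
  have hinv : ∀ e ∈ h.E, Function.invFunOn η ↑h.E (η e) = e := fun e he =>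
    h2.leftInvOn_invFunOn he
  have himg : ∀ e ∈ h.E, η e ∈ h.E.image η := fun e he => Finset.mem_image_of_mem η he
  refine ⟨h1, h2, h3, h4, h5, rfl, rfl, ?_, ?_, rfl⟩
  · intro e he
    have heg : e ∈ g.E := Finset.mem_of_mem_erase he
    have hni : e ∉ h.E.image η := by
      simp only [Finset.mem_image]
      rintro ⟨x, hx, rfl⟩
      exact h5 x hx heg
    refine ⟨?_, ?_⟩
    · show (if _ then _ else _) = _
      rw [if_neg hni]
    · show (if _ then _ else _) = _
      rw [if_neg hni]
  · intro e he
    refine ⟨?_, ?_⟩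
    · show (if _ then _ else _) = _
      rw [if_pos (himg e he), hinv e he]
    · show (if _ then _ else _) = _
      rw [if_pos (himg e he), hinv e he]

/-- Existence of fresh replacement data. -/
lemma exists_data (g : HGraph L) (e₀ : ℕ) (h : HGraph L) (F : Finset ℕ)
    (hlen : h.ext.length = (g.att e₀).length)
    (hext1 : h.ext.Nodup) (hext2 : ∀ v ∈ h.ext, v ∈ h.V)
    (hatt1 : (g.att e₀).Nodup) (hatt2 : ∀ v ∈ g.att e₀, v ∈ g.V) :
    ∃ ρ η : ℕ → ℕ,
      Set.InjOn ρ ↑h.V ∧ Set.InjOn η ↑h.E ∧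
      (∀ v ∈ h.V, v ∉ h.ext → ρ v ∉ g.V ∪ F) ∧
      h.ext.map ρ = g.att e₀ ∧
      (∀ e ∈ h.E, η e ∉ g.E ∪ F) := by
  classical
  set N := (g.V ∪ F).sup id + 1 with hN
  set M := (g.E ∪ F).sup id + 1 with hM
  have hmemN : ∀ x ∈ g.V, x < N := fun x hx => by
    have := Finset.le_sup (f := id) (Finset.mem_union_left F hx)
    simp only [id] at this; omega
  refine ⟨fun v => if v ∈ h.ext then (g.att e₀).getD (h.ext.idxOf v) 0 else N + v,
    fun e => M + e, ?_, ?_, ?_, ?_, ?_⟩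
  · intro x hx y hy hxy
    by_cases hxe : x ∈ h.ext <;> by_cases hye : y ∈ h.ext <;>
      simp only [hxe, hye, if_pos, if_neg, if_true, if_false] at hxy
    · have hxl : h.ext.idxOf x < (g.att e₀).length := hlen ▸ List.idxOf_lt_length_iff.2 hxe
      have hyl : h.ext.idxOf y < (g.att e₀).length := hlen ▸ List.idxOf_lt_length_iff.2 hye
      rw [List.getD_eq_getElem _ _ hxl, List.getD_eq_getElem _ _ hyl] at hxy
      have hidx := (hatt1.getElem_inj_iff).1 hxy
      calc x = h.ext[h.ext.idxOf x]'(List.idxOf_lt_length_iff.2 hxe) :=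
              (List.getElem_idxOf _).symm
        _ = h.ext[h.ext.idxOf y]'(List.idxOf_lt_length_iff.2 hye) := by
              congr 1
        _ = y := List.getElem_idxOf _
    · exfalso
      have hxl : h.ext.idxOf x < (g.att e₀).length := hlen ▸ List.idxOf_lt_length_iff.2 hxe
      rw [List.getD_eq_getElem _ _ hxl] at hxy
      have : (g.att e₀)[h.ext.idxOf x] ∈ g.V := hatt2 _ (List.getElem_mem _)
      have := hmemN _ this
      omega
    · exfalso
      have hyl : h.ext.idxOf y < (g.att e₀).length := hlen ▸ List.idxOf_lt_length_iff.2 hye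
      rw [List.getD_eq_getElem _ _ hyl] at hxy
      have : (g.att e₀)[h.ext.idxOf y] ∈ g.V := hatt2 _ (List.getElem_mem _)
      have := hmemN _ this
      omega
    · omega
  · intro x _ y _ hxy; dsimp only at hxy; omega
  · intro v _ hv
    simp only [hv, if_neg, if_false]
    intro hmem
    have : N + v ≤ (g.V ∪ F).sup id := by
      have := Finset.le_sup (f := id) (Finset.mem_union_left F hmem)
      simpa [id] using this
    omega
  · refine List.ext_getElem (by simp [hlen]) ?_
    intro i h₁ h₂
    have hi : i < h.ext.length := by simpa using h₁
    simp only [List.getElem_map]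
    have hmem : h.ext[i] ∈ h.ext := List.getElem_mem _
    simp only [hmem, if_pos]
    rw [List.Nodup.idxOf_getElem hext1 i hi, List.getD_eq_getElem _ _ h₂]
  · intro e _
    intro hmem
    have : M + e ≤ (g.E ∪ F).sup id := by
      have := Finset.le_sup (f := id) (Finset.mem_union_left F hmem)
      simpa [id] using this
    omega

section Grammar

variable (G : HRGrammar T) (rkT : T → ℕ)

/-- All nonterminal labels are declared. -/
def LabOK (g : HGraph (T ⊕ ℕ)) : Prop :=
  ∀ e ∈ g.E, ∀ B : ℕ, g.lab e = Sum.inr B → B ∈ G.NT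

def Good (g : HGraph (T ⊕ ℕ)) : Prop := g.WF (G.rk rkT) ∧ LabOK G g

variable {G} {rkT}

lemma rspec_ext {g h g' : HGraph L} {e₀ : ℕ} {ρ η : ℕ → ℕ}
    (R : RSpec g e₀ h g' ρ η) : g'.ext = g.ext := R.2.2.2.2.2.2.2.2.2

lemma derive_ext {g g' : HGraph (T ⊕ ℕ)} (st : G.Derive g g') : g'.ext = g.ext := by
  obtain ⟨e, _, A, _, _, ρ, η, R⟩ := st
  exact rspec_ext R

lemma star_ext {g g' : HGraph (T ⊕ ℕ)}
    (st : Relation.ReflTransGen G.Derive g g') : g'.ext = g.ext := by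
  induction st with
  | refl => rfl
  | tail _ h ih => rw [derive_ext h, ih]

lemma wf_repl {rk : L → ℕ} {g h g' : HGraph L} {e₀ : ℕ} {ρ η : ℕ → ℕ}
    (R : RSpec g e₀ h g' ρ η) (wg : g.WF rk) (wh : h.WF rk) : g'.WF rk := by
  obtain ⟨hρ, hη, hfr, hextmap, hfrE, hV, hE, hold, hnew, hext⟩ := R
  refine ⟨?_, ?_, ?_, ?_⟩
  · rw [hV]; exact wg.1.mono Finset.subset_union_left
  · intro e he
    rw [hE] at he
    rcases Finset.mem_union.1 he with he' | he'
    · obtain ⟨ha, hl⟩ := hold e he'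
      have heg : e ∈ g.E := Finset.mem_of_mem_erase he'
      obtain ⟨m1, m2, m3, m4⟩ := wg.2.1 e heg
      rw [ha, hl]
      exact ⟨fun v hv => hV ▸ Finset.mem_union_left _ (m1 v hv), m2, m3, m4⟩
    · obtain ⟨x, hx, rfl⟩ := Finset.mem_image.1 he'
      obtain ⟨ha, hl⟩ := hnew x hx
      obtain ⟨m1, m2, m3, m4⟩ := wh.2.1 x hx
      rw [ha, hl]
      refine ⟨?_, ?_, ?_, ?_⟩
      · intro v hv
        obtain ⟨w, hw, rfl⟩ := List.mem_map.1 hv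
        exact hV ▸ Finset.mem_union_right _ (Finset.mem_image_of_mem ρ (m1 w hw))
      · exact m2.map_on fun a ha b hb hab => hρ (m1 a ha) (m1 b hb) hab
      · rw [List.length_map]; exact m3
      · simp [m4]
  · rw [hext, hV]
    exact fun v hv => Finset.mem_union_left _ (wg.2.2.1 v hv)
  · rw [hext]; exact wg.2.2.2

lemma derive_good (hWF : G.WF rkT) {g g' : HGraph (T ⊕ ℕ)}
    (hg : Good G rkT g) (st : G.Derive g g') : Good G rkT g' := by
  obtain ⟨e, he, A, hA, hlab, ρ, η, R⟩ := st
  refine ⟨wf_repl R hg.1 ((hWF.2.2.2.1 A hA).1), ?_⟩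
  intro e' he' B hB
  rw [R.2.2.2.2.2.2.1] at he'
  rcases Finset.mem_union.1 he' with h' | h'
  · have := (R.2.2.2.2.2.2.2.1 e' h').2
    exact hg.2 e' (Finset.mem_of_mem_erase h') B (by rw [← this]; exact hB)
  · obtain ⟨x, hx, rfl⟩ := Finset.mem_image.1 h'
    have := (R.2.2.2.2.2.2.2.2.1 x hx).2
    exact hWF.2.2.2.2.2 A hA x hx B (by rw [← this]; exact hB)

lemma star_good (hWF : G.WF rkT) {g g' : HGraph (T ⊕ ℕ)}
    (hg : Good G rkT g) (st : Relation.ReflTransGen G.Derive g g') : Good G rkT g' := by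
  induction st with
  | refl => exact hg
  | tail _ h ih => exact derive_good hWF ih h

/-- Height of a nonterminal: number of nonterminals reachable from it. -/
noncomputable def ht (G : HRGrammar T) (B : ℕ) : ℕ :=
  (G.NT.filter fun C => Relation.ReflTransGen G.dep B C).card

noncomputable def htL (G : HRGrammar T) : (T ⊕ ℕ) → ℕ := Sum.elim (fun _ => 0) (ht G)

noncomputable def cBase (G : HRGrammar T) : ℕ := (G.NT.sup fun A => (G.rhs A).E.card) + 2

noncomputable def M (G : HRGrammar T) (s : Finset ℕ) (g : HGraph (T ⊕ ℕ)) : ℕ :=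
  ∑ e ∈ s, (cBase G) ^ (htL G (g.lab e))

lemma ht_pos {B : ℕ} (hB : B ∈ G.NT) : 1 ≤ ht G B := by
  have : B ∈ G.NT.filter fun C => Relation.ReflTransGen G.dep B C :=
    Finset.mem_filter.2 ⟨hB, Relation.ReflTransGen.refl⟩
  exact Finset.card_pos.2 ⟨B, this⟩

lemma ht_lt (hSL : G.SL) {A B : ℕ} (h : G.dep A B) : ht G B < ht G A := by
  apply Finset.card_lt_card
  constructor
  · intro C hC
    obtain ⟨hC1, hC2⟩ := Finset.mem_filter.1 hC
    exact Finset.mem_filter.2 ⟨hC1, Relation.ReflTransGen.head h hC2⟩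
  · intro hsub
    have hA : A ∈ G.NT.filter fun C => Relation.ReflTransGen G.dep A C :=
      Finset.mem_filter.2 ⟨h.1, Relation.ReflTransGen.refl⟩
    have := hsub hA
    obtain ⟨_, hr⟩ := Finset.mem_filter.1 this
    exact hSL.1 A (Relation.TransGen.head' h hr)

lemma cBase_pos : 0 < cBase G := by unfold cBase; omega

lemma rhs_sum_lt (hWF : G.WF rkT) (hSL : G.SL) {A : ℕ} (hA : A ∈ G.NT) :
    ∑ x ∈ (G.rhs A).E, (cBase G) ^ (htL G ((G.rhs A).lab x)) < (cBase G) ^ (ht G A) := by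
  have hbound : ∀ x ∈ (G.rhs A).E, (cBase G) ^ (htL G ((G.rhs A).lab x)) ≤
      (cBase G) ^ (ht G A - 1) := by
    intro x hx
    apply Nat.pow_le_pow_right cBase_pos
    cases hl : (G.rhs A).lab x with
    | inl a => simp [htL]
    | inr B =>
      have hB : B ∈ G.NT := hWF.2.2.2.2.2 A hA x hx B hl
      have hdep : G.dep A B := ⟨hA, hB, x, hx, hl⟩
      have := ht_lt hSL hdep
      simp only [htL, Sum.elim_inr]
      omega
  calc ∑ x ∈ (G.rhs A).E, (cBase G) ^ (htL G ((G.rhs A).lab x))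
      ≤ ∑ _x ∈ (G.rhs A).E, (cBase G) ^ (ht G A - 1) := Finset.sum_le_sum hbound
    _ = (G.rhs A).E.card * (cBase G) ^ (ht G A - 1) := by
        rw [Finset.sum_const, smul_eq_mul]
    _ < (cBase G) * (cBase G) ^ (ht G A - 1) := by
        have hc : (G.rhs A).E.card < cBase G := by
          have : (G.rhs A).E.card ≤ G.NT.sup fun A => (G.rhs A).E.card :=
            Finset.le_sup (f := fun A => (G.rhs A).E.card) hA
          unfold cBase; omega
        exact Nat.mul_lt_mul_of_lt_of_le hc (le_refl _) (Nat.pow_pos cBase_pos)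
    _ = (cBase G) ^ (ht G A) := by
        rw [← pow_succ']
        congr 1
        have := ht_pos (G := G) hA
        omega

/-- Measure decrease for a replacement step, on any edge set of interest. -/
lemma M_lt (hWF : G.WF rkT) (hSL : G.SL) {g g' : HGraph (T ⊕ ℕ)} {e A : ℕ} {ρ η : ℕ → ℕ}
    (he : e ∈ g.E) (hA : A ∈ G.NT) (hlab : g.lab e = Sum.inr A)
    (R : RSpec g e (G.rhs A) g' ρ η) (s : Finset ℕ) (hs : s ⊆ g.E) (hes : e ∈ s) :
    M G ((s.erase e) ∪ (G.rhs A).E.image η) g' < M G s g := by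
  obtain ⟨hρ, hη, hfr, hextmap, hfrE, hV, hE, hold, hnew, hext⟩ := R
  have hdisj : Disjoint (s.erase e) ((G.rhs A).E.image η) := by
    rw [Finset.disjoint_right]
    intro x hx
    obtain ⟨y, hy, rfl⟩ := Finset.mem_image.1 hx
    intro hmem
    exact hfrE y hy (hs (Finset.mem_of_mem_erase hmem))
  have h1 : M G ((s.erase e) ∪ (G.rhs A).E.image η) g' =
      M G (s.erase e) g + ∑ x ∈ (G.rhs A).E, (cBase G) ^ (htL G ((G.rhs A).lab x)) := by
    unfold M
    rw [Finset.sum_union hdisj]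
    congr 1
    · apply Finset.sum_congr rfl
      intro x hx
      have hx' : x ∈ g.E.erase e :=
        Finset.mem_erase.2 ⟨(Finset.mem_erase.1 hx).1, hs (Finset.mem_of_mem_erase hx)⟩
      rw [(hold x hx').2]
    · rw [Finset.sum_image (fun x hx y hy hxy => hη hx hy hxy)]
      apply Finset.sum_congr rfl
      intro x hx
      rw [(hnew x hx).2]
  have h2 : M G s g = M G (s.erase e) g + (cBase G) ^ (ht G A) := by
    unfold M
    rw [← Finset.sum_erase_add _ _ hes, hlab]
    simp [htL]
  rw [h1, h2]
  have := rhs_sum_lt hWF hSL hA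
  omega

end Grammar
section Norm

variable {G : HRGrammar T} {rkT : T → ℕ}

/-- One derivation step at a given nonterminal edge, with image avoiding `F`. -/
lemma exists_step (hWF : G.WF rkT) {g : HGraph (T ⊕ ℕ)} (hg : Good G rkT g)
    {e B : ℕ} (he : e ∈ g.E) (hlab : g.lab e = Sum.inr B) (hB : B ∈ G.NT) (F : Finset ℕ) :
    ∃ (g' : HGraph (T ⊕ ℕ)) (ρ η : ℕ → ℕ),
      RSpec g e (G.rhs B) g' ρ η ∧ G.Derive g g' ∧
      (∀ v ∈ (G.rhs B).V, v ∉ (G.rhs B).ext → ρ v ∉ F) ∧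
      (∀ x ∈ (G.rhs B).E, η x ∉ F) := by
  obtain ⟨hwg, hlok⟩ := hg
  obtain ⟨hrwf, hrlen⟩ := hWF.2.2.2.1 B hB
  obtain ⟨m1, m2, m3, m4⟩ := hwg.2.1 e he
  have hlen : (G.rhs B).ext.length = (g.att e).length := by
    rw [hrlen, m3, hlab]; rfl
  obtain ⟨ρ, η, h1, h2, h3, h4, h5⟩ :=
    exists_data g e (G.rhs B) F hlen hrwf.2.2.2 hrwf.2.2.1 m2 m1
  have h3' : ∀ v ∈ (G.rhs B).V, v ∉ (G.rhs B).ext → ρ v ∉ g.V := by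
    intro v hv hve
    have := h3 v hv hve
    simp only [Finset.mem_union, not_or] at this
    exact this.1
  have h5' : ∀ x ∈ (G.rhs B).E, η x ∉ g.E := by
    intro x hx
    have := h5 x hx
    simp only [Finset.mem_union, not_or] at this
    exact this.1
  have R := repl_rspec (g := g) (e₀ := e) h1 h2 h3' h4 h5'
  refine ⟨_, ρ, η, R, ⟨e, he, B, hB, hlab, ρ, η, R⟩, ?_, ?_⟩
  · intro v hv hve
    have := h3 v hv hve
    simp only [Finset.mem_union, not_or] at this
    exact this.2
  · intro x hx
    have := h5 x hx
    simp only [Finset.mem_union, not_or] at this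
    exact this.2

/-- Every good graph derives a terminal graph. -/
lemma exists_terminal (hWF : G.WF rkT) (hSL : G.SL) :
    ∀ n, ∀ g : HGraph (T ⊕ ℕ), M G g.E g ≤ n → Good G rkT g →
    ∃ h, Relation.ReflTransGen G.Derive g h ∧ HRGrammar.Terminal h ∧ Good G rkT h := by
  intro n
  induction n with
  | zero =>
    intro g hM hg
    refine ⟨g, Relation.ReflTransGen.refl, ?_, hg⟩
    intro e he
    cases hl : g.lab e with
    | inl a => exact ⟨a, rfl⟩
    | inr B =>
      exfalso
      have h1 : (cBase G) ^ (htL G (g.lab e)) ≤ M G g.E g :=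
        Finset.single_le_sum (f := fun e => (cBase G) ^ (htL G (g.lab e)))
          (fun _ _ => Nat.zero_le _) he
      have h2 : 0 < (cBase G) ^ (htL G (g.lab e)) := Nat.pow_pos cBase_pos
      omega
  | succ n ih =>
    intro g hM hg
    by_cases hterm : ∀ e ∈ g.E, ∃ a, g.lab e = Sum.inl a
    · exact ⟨g, Relation.ReflTransGen.refl, hterm, hg⟩
    · push_neg at hterm
      obtain ⟨e, he, hne⟩ := hterm
      obtain ⟨B, hlab⟩ : ∃ B, g.lab e = Sum.inr B := by
        cases hl : g.lab e with
        | inl a => exact (hne a hl).elim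
        | inr B => exact ⟨B, rfl⟩
      have hB : B ∈ G.NT := hg.2 e he B hlab
      obtain ⟨g', ρ, η, R, st, _, _⟩ := exists_step hWF hg he hlab hB ∅
      have hlt : M G g'.E g' < M G g.E g := by
        have := M_lt hWF hSL he hB hlab R g.E (Finset.Subset.refl _) he
        rwa [← R.2.2.2.2.2.2.1] at this
      obtain ⟨h, hst, hterm, hgood⟩ := ih g' (by omega) (derive_good hWF hg st)
      exact ⟨h, Relation.ReflTransGen.head st hst, hterm, hgood⟩

/-- Every good graph with a distinguished edge `e₀` derives a graph in which every
edge except `e₀` is terminal, `e₀` surviving untouched. -/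
lemma exists_context (hWF : G.WF rkT) (hSL : G.SL) :
    ∀ n, ∀ g : HGraph (T ⊕ ℕ), ∀ e₀, M G (g.E.erase e₀) g ≤ n → Good G rkT g →
    e₀ ∈ g.E →
    ∃ k, Relation.ReflTransGen G.Derive g k ∧ Good G rkT k ∧ e₀ ∈ k.E ∧
      k.att e₀ = g.att e₀ ∧ k.lab e₀ = g.lab e₀ ∧
      (∀ e ∈ k.E, e ≠ e₀ → ∃ a, k.lab e = Sum.inl a) := by
  intro n
  induction n with
  | zero =>
    intro g e₀ hM hg he₀
    refine ⟨g, Relation.ReflTransGen.refl, hg, he₀, rfl, rfl, ?_⟩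
    intro e he hne
    cases hl : g.lab e with
    | inl a => exact ⟨a, rfl⟩
    | inr B =>
      exfalso
      have hee : e ∈ g.E.erase e₀ := Finset.mem_erase.2 ⟨hne, he⟩
      have h1 : (cBase G) ^ (htL G (g.lab e)) ≤ M G (g.E.erase e₀) g :=
        Finset.single_le_sum (f := fun e => (cBase G) ^ (htL G (g.lab e)))
          (fun _ _ => Nat.zero_le _) hee
      have h2 : 0 < (cBase G) ^ (htL G (g.lab e)) := Nat.pow_pos cBase_pos
      omega
  | succ n ih =>
    intro g e₀ hM hg he₀
    by_cases hterm : ∀ e ∈ g.E, e ≠ e₀ → ∃ a, g.lab e = Sum.inl a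
    · exact ⟨g, Relation.ReflTransGen.refl, hg, he₀, rfl, rfl, hterm⟩
    · push_neg at hterm
      obtain ⟨e, he, hne, hnl⟩ := hterm
      obtain ⟨B, hlab⟩ : ∃ B, g.lab e = Sum.inr B := by
        cases hl : g.lab e with
        | inl a => exact (hnl a hl).elim
        | inr B => exact ⟨B, rfl⟩
      have hB : B ∈ G.NT := hg.2 e he B hlab
      obtain ⟨g', ρ, η, R, st, _, _⟩ := exists_step hWF hg he hlab hB ∅
      have hE' := R.2.2.2.2.2.2.1
      have he₀' : e₀ ∈ g'.E := by
        rw [hE']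
        exact Finset.mem_union_left _ (Finset.mem_erase.2 ⟨Ne.symm hne, he₀⟩)
      have hatt0 := R.2.2.2.2.2.2.2.1 e₀ (Finset.mem_erase.2 ⟨Ne.symm hne, he₀⟩)
      have hfrE := R.2.2.2.2.1
      have he₀im : e₀ ∉ (G.rhs B).E.image η := by
        simp only [Finset.mem_image]
        rintro ⟨x, hx, rfl⟩
        exact hfrE x hx he₀
      have hset : g'.E.erase e₀ = ((g.E.erase e₀).erase e) ∪ (G.rhs B).E.image η := by
        rw [hE', Finset.erase_union_distrib, Finset.erase_right_comm,
          Finset.erase_eq_of_notMem he₀im]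
      have hlt : M G (g'.E.erase e₀) g' < M G (g.E.erase e₀) g := by
        rw [hset]
        exact M_lt hWF hSL he hB hlab R (g.E.erase e₀) (Finset.erase_subset _ _)
          (Finset.mem_erase.2 ⟨hne, he⟩)
      obtain ⟨k, hst, hgood, hk1, hk2, hk3, hk4⟩ :=
        ih g' e₀ (by omega) (derive_good hWF hg st) he₀'
      exact ⟨k, Relation.ReflTransGen.head st hst, hgood, hk1,
        hk2.trans hatt0.1, hk3.trans hatt0.2, hk4⟩

/-- From a graph containing a `B`-edge one can derive a graph containing a `C`-edge,
whenever `C` is reachable from `B` in the dependency relation. -/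
lemma reach (hWF : G.WF rkT) {B C : ℕ} (hdep : Relation.ReflTransGen G.dep B C) :
    ∀ g : HGraph (T ⊕ ℕ), Good G rkT g → (∃ e ∈ g.E, g.lab e = Sum.inr B) →
    ∃ g', Relation.ReflTransGen G.Derive g g' ∧ Good G rkT g' ∧
      ∃ e ∈ g'.E, g'.lab e = Sum.inr C := by
  induction hdep using Relation.ReflTransGen.head_induction_on with
  | refl => exact fun g hg he => ⟨g, Relation.ReflTransGen.refl, hg, he⟩
  | head hd _ ih =>
    rename_i B₁ B₂ _
    intro g hg he
    obtain ⟨e, he, hlab⟩ := he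
    obtain ⟨hB₁, hB₂, x, hx, hxl⟩ := hd
    obtain ⟨g', ρ, η, R, st, _, _⟩ := exists_step hWF hg he hlab hB₁ ∅
    have hnew := R.2.2.2.2.2.2.2.2.1 x hx
    have hxe : η x ∈ g'.E := by
      rw [R.2.2.2.2.2.2.1]
      exact Finset.mem_union_right _ (Finset.mem_image_of_mem η hx)
    obtain ⟨g'', hst, hgood, hfin⟩ := ih g' (derive_good hWF hg st)
      ⟨η x, hxe, hnew.2.trans hxl⟩
    exact ⟨g'', Relation.ReflTransGen.head st hst, hgood, hfin⟩

end Norm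
section Iso

variable {L : Type}

lemma map_eq_map_imp {α β : Type*} {l : List α} {f₁ f₂ : α → β}
    (h : l.map f₁ = l.map f₂) : ∀ x ∈ l, f₁ x = f₂ x := by
  induction l with
  | nil => intro x hx; cases hx
  | cons a l ih =>
    simp only [List.map_cons, List.cons.injEq] at h
    intro x hx
    rcases List.mem_cons.1 hx with rfl | hx
    · exact h.1
    · exact ih h.2 x hx

lemma image_erase_injOn {f : ℕ → ℕ} {s : Finset ℕ} {e : ℕ}
    (hinj : Set.InjOn f ↑s) (he : e ∈ s) :
    (s.image f).erase (f e) = (s.erase e).image f := by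
  ext z
  simp only [Finset.mem_erase, Finset.mem_image]
  constructor
  · rintro ⟨hne, x, hx, rfl⟩
    exact ⟨x, ⟨fun hxe => hne (by rw [hxe]), hx⟩, rfl⟩
  · rintro ⟨x, ⟨hxe, hxs⟩, rfl⟩
    exact ⟨fun hfe => hxe (hinj hxs he hfe), x, hxs, rfl⟩

lemma iso_refl (g : HGraph L) : g.Isomorphic g :=
  ⟨id, id, Set.bijOn_id _, Set.bijOn_id _, fun e _ => by simp, fun _ _ => rfl, by simp⟩

lemma iso_trans {g g₁ g₂ : HGraph L} (h1 : g.Isomorphic g₁) (h2 : g₁.Isomorphic g₂) :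
    g.Isomorphic g₂ := by
  obtain ⟨f₁, fe₁, hb₁, he₁, ha₁, hl₁, hx₁⟩ := h1
  obtain ⟨f₂, fe₂, hb₂, he₂, ha₂, hl₂, hx₂⟩ := h2
  refine ⟨f₂ ∘ f₁, fe₂ ∘ fe₁, hb₂.comp hb₁, he₂.comp he₁, ?_, ?_, ?_⟩
  · intro e he
    have h1 : fe₁ e ∈ g₁.E := he₁.1 he
    simp only [Function.comp_apply]
    rw [ha₂ _ h1, ha₁ _ he, List.map_map]
  · intro e he
    have h1 : fe₁ e ∈ g₁.E := he₁.1 he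
    simp only [Function.comp_apply]
    rw [hl₂ _ h1, hl₁ _ he]
  · rw [hx₂, hx₁, List.map_map]

lemma iso_terminal {T : Type} {g g' : HGraph (T ⊕ ℕ)} (h : g.Isomorphic g')
    (ht : HRGrammar.Terminal g) : HRGrammar.Terminal g' := by
  obtain ⟨f, fe, hb, he, ha, hl, hx⟩ := h
  intro e' he'
  obtain ⟨e, heE, rfl⟩ := he.2.2 he'
  obtain ⟨a, hae⟩ := ht e heE
  exact ⟨a, by rw [hl e heE, hae]⟩

/-- Replacing corresponding edges of isomorphic graphs by the same graph yields
isomorphic results. -/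
lemma congr_repl {rk : L → ℕ} {g g' h g₁ g₁' : HGraph L} {e₀ : ℕ}
    {f fe ρ η ρ' η' : ℕ → ℕ}
    (wg : g.WF rk) (wh : h.WF rk) (he₀ : e₀ ∈ g.E)
    (hbV : Set.BijOn f ↑g.V ↑g'.V) (hbE : Set.BijOn fe ↑g.E ↑g'.E)
    (hatt : ∀ e ∈ g.E, g'.att (fe e) = (g.att e).map f)
    (hlab : ∀ e ∈ g.E, g'.lab (fe e) = g.lab e)
    (hext : g'.ext = g.ext.map f)
    (R : RSpec g e₀ h g₁ ρ η) (R' : RSpec g' (fe e₀) h g₁' ρ' η') :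
    g₁.Isomorphic g₁' := by
  classical
  obtain ⟨hρ, hη, hfr, hextmap, hfrE, hV, hE, hold, hnew, hxt⟩ := R
  obtain ⟨hρ', hη', hfr', hextmap', hfrE', hV', hE', hold', hnew', hxt'⟩ := R'
  set F : ℕ → ℕ := fun x => if x ∈ g.V then f x else ρ' (Function.invFunOn ρ ↑h.V x) with hF
  set FE : ℕ → ℕ := fun e => if e ∈ g.E then fe e else η' (Function.invFunOn η ↑h.E e) with hFE
  have hρext : ∀ v ∈ h.ext, ρ v ∈ g.V := by
    intro v hv
    have : ρ v ∈ g.att e₀ := hextmap ▸ List.mem_map_of_mem hv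
    exact (wg.2.1 e₀ he₀).1 _ this
  have hcompat : ∀ v ∈ h.ext, ρ' v = f (ρ v) := by
    have hmm : h.ext.map ρ' = h.ext.map (f ∘ ρ) := by
      rw [hextmap', hatt e₀ he₀, ← hextmap, List.map_map]
    intro v hv
    exact map_eq_map_imp hmm v hv
  have hFρ : ∀ v ∈ h.V, F (ρ v) = ρ' v := by
    intro v hv
    by_cases hvg : ρ v ∈ g.V
    · have hvext : v ∈ h.ext := by
        by_contra hne
        exact hfr v hv hne hvg
      simp only [hF, hvg, if_pos]
      exact (hcompat v hvext).symm
    · have hvext : v ∉ h.ext := fun hc => hvg (hρext v hc)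
      simp only [hF, hvg, if_neg, if_false]
      rw [hρ.leftInvOn_invFunOn hv]
  have hFold : ∀ x ∈ g.V, F x = f x := fun x hx => by simp only [hF, hx, if_pos]
  have hFEold : ∀ x ∈ g.E, FE x = fe x := fun x hx => by simp only [hFE, hx, if_pos]
  have hFEη : ∀ x ∈ h.E, FE (η x) = η' x := by
    intro x hx
    have : η x ∉ g.E := hfrE x hx
    simp only [hFE, this, if_neg, if_false]
    rw [hη.leftInvOn_invFunOn hx]
  -- decompose membership in g₁.V
  have hcase : ∀ x ∈ g₁.V, x ∈ g.V ∨ ∃ v ∈ h.V, v ∉ h.ext ∧ ρ v = x := by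
    intro x hx
    rw [hV] at hx
    rcases Finset.mem_union.1 hx with h' | h'
    · exact Or.inl h'
    · obtain ⟨v, hv, rfl⟩ := Finset.mem_image.1 h'
      by_cases hvg : ρ v ∈ g.V
      · exact Or.inl hvg
      · exact Or.inr ⟨v, hv, fun hc => hvg (hρext v hc), rfl⟩
  have hcaseE : ∀ x ∈ g₁.E, (x ∈ g.E ∧ x ≠ e₀) ∨ ∃ y ∈ h.E, η y = x := by
    intro x hx
    rw [hE] at hx
    rcases Finset.mem_union.1 hx with h' | h'
    · exact Or.inl ⟨Finset.mem_of_mem_erase h', (Finset.mem_erase.1 h').1⟩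
    · obtain ⟨y, hy, rfl⟩ := Finset.mem_image.1 h'
      exact Or.inr ⟨y, hy, rfl⟩
  refine ⟨F, FE, ⟨?_, ?_, ?_⟩, ⟨?_, ?_, ?_⟩, ?_, ?_, ?_⟩
  -- MapsTo F
  · intro x hx
    rcases hcase x hx with h' | ⟨v, hv, _, rfl⟩
    · rw [hFold x h']
      rw [hV']
      exact Finset.mem_coe.2 (Finset.mem_union_left _ (Finset.mem_coe.1 (hbV.1 h')))
    · rw [hFρ v hv, hV']
      exact Finset.mem_coe.2 (Finset.mem_union_right _ (Finset.mem_image_of_mem ρ' hv))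
  -- InjOn F
  · intro x hx y hy hxy
    rcases hcase x hx with h1 | ⟨v, hv, hvi, rfl⟩ <;> rcases hcase y hy with h2 | ⟨w, hw, hwi, rfl⟩
    · rw [hFold x h1, hFold y h2] at hxy
      exact hbV.2.1 h1 h2 hxy
    · exfalso
      rw [hFold x h1, hFρ w hw] at hxy
      have : f x ∈ g'.V := hbV.1 h1
      rw [hxy] at this
      exact hfr' w hw hwi this
    · exfalso
      rw [hFold y h2, hFρ v hv] at hxy
      have : f y ∈ g'.V := hbV.1 h2
      rw [← hxy] at this
      exact hfr' v hv hvi this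
    · rw [hFρ v hv, hFρ w hw] at hxy
      rw [hρ' hv hw hxy]
  -- SurjOn F
  · intro z hz
    rw [hV'] at hz
    rcases Finset.mem_union.1 (Finset.mem_coe.1 hz) with h' | h'
    · obtain ⟨x, hx, rfl⟩ := hbV.2.2 h'
      exact ⟨x, Finset.mem_coe.2 (hV ▸ Finset.mem_union_left _ (Finset.mem_coe.1 hx)),
        hFold x hx⟩
    · obtain ⟨v, hv, rfl⟩ := Finset.mem_image.1 h'
      exact ⟨ρ v, Finset.mem_coe.2 (hV ▸ Finset.mem_union_right _ (Finset.mem_image_of_mem ρ hv)),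
        hFρ v hv⟩
  -- MapsTo FE
  · intro x hx
    rcases hcaseE x hx with ⟨h1, h2⟩ | ⟨y, hy, rfl⟩
    · rw [hFEold x h1, hE']
      refine Finset.mem_coe.2 (Finset.mem_union_left _ (Finset.mem_erase.2 ⟨?_, ?_⟩))
      · intro hc
        exact h2 (hbE.2.1 h1 he₀ hc)
      · exact Finset.mem_coe.1 (hbE.1 h1)
    · rw [hFEη y hy, hE']
      exact Finset.mem_coe.2 (Finset.mem_union_right _ (Finset.mem_image_of_mem η' hy))
  -- InjOn FE
  · intro x hx y hy hxy
    rcases hcaseE x hx with ⟨h1, _⟩ | ⟨v, hv, rfl⟩ <;> rcases hcaseE y hy with ⟨h2, _⟩ | ⟨w, hw, rfl⟩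
    · rw [hFEold x h1, hFEold y h2] at hxy
      exact hbE.2.1 h1 h2 hxy
    · exfalso
      rw [hFEold x h1, hFEη w hw] at hxy
      have : fe x ∈ g'.E := hbE.1 h1
      rw [hxy] at this
      exact hfrE' w hw this
    · exfalso
      rw [hFEold y h2, hFEη v hv] at hxy
      have : fe y ∈ g'.E := hbE.1 h2
      rw [← hxy] at this
      exact hfrE' v hv this
    · rw [hFEη v hv, hFEη w hw] at hxy
      rw [hη' hv hw hxy]
  -- SurjOn FE
  · intro z hz
    rw [hE'] at hz
    rcases Finset.mem_union.1 (Finset.mem_coe.1 hz) with h' | h'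
    · obtain ⟨hne, hzE⟩ := Finset.mem_erase.1 h'
      obtain ⟨x, hx, rfl⟩ := hbE.2.2 hzE
      have hxe : x ≠ e₀ := fun hc => hne (by rw [hc])
      exact ⟨x, Finset.mem_coe.2 (hE ▸ Finset.mem_union_left _ (Finset.mem_erase.2 ⟨hxe, Finset.mem_coe.1 hx⟩)),
        hFEold x hx⟩
    · obtain ⟨y, hy, rfl⟩ := Finset.mem_image.1 h'
      exact ⟨η y, Finset.mem_coe.2 (hE ▸ Finset.mem_union_right _ (Finset.mem_image_of_mem η hy)),
        hFEη y hy⟩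
  -- att
  · intro e he
    rcases hcaseE e he with ⟨h1, h2⟩ | ⟨y, hy, rfl⟩
    · have he' : e ∈ g.E.erase e₀ := Finset.mem_erase.2 ⟨h2, h1⟩
      have hfee : fe e ∈ g'.E.erase (fe e₀) :=
        Finset.mem_erase.2 ⟨fun hc => h2 (hbE.2.1 h1 he₀ hc), Finset.mem_coe.1 (hbE.1 h1)⟩
      rw [hFEold e h1, (hold' _ hfee).1, hatt e h1, (hold e he').1]
      apply List.map_congr_left
      intro a ha
      exact (hFold a ((wg.2.1 e h1).1 a ha)).symm
    · rw [hFEη y hy, (hnew' y hy).1, (hnew y hy).1, List.map_map]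
      apply List.map_congr_left
      intro a ha
      exact (hFρ a ((wh.2.1 y hy).1 a ha)).symm
  -- lab
  · intro e he
    rcases hcaseE e he with ⟨h1, h2⟩ | ⟨y, hy, rfl⟩
    · have he' : e ∈ g.E.erase e₀ := Finset.mem_erase.2 ⟨h2, h1⟩
      have hfee : fe e ∈ g'.E.erase (fe e₀) :=
        Finset.mem_erase.2 ⟨fun hc => h2 (hbE.2.1 h1 he₀ hc), Finset.mem_coe.1 (hbE.1 h1)⟩
      rw [hFEold e h1, (hold' _ hfee).2, hlab e h1, (hold e he').2]
    · rw [hFEη y hy, (hnew' y hy).2, (hnew y hy).2]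
  -- ext
  · rw [hxt', hxt, hext]
    apply List.map_congr_left
    intro a ha
    exact (hFold a (wg.2.2.1 a ha)).symm

end Iso
section Sim

variable {G : HRGrammar T} {rkT : T → ℕ}

lemma derive_iso (hWF : G.WF rkT) {g g' g₁ : HGraph (T ⊕ ℕ)}
    (hg : Good G rkT g) (hg' : Good G rkT g') (iso : g.Isomorphic g')
    (st : G.Derive g g₁) :
    ∃ g₁', G.Derive g' g₁' ∧ g₁.Isomorphic g₁' := by
  obtain ⟨f, fe, hbV, hbE, hatt, hlab, hext⟩ := iso
  obtain ⟨e, he, A, hA, hlabe, ρ, η, R⟩ := st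
  have hfe : fe e ∈ g'.E := hbE.1 he
  have hlabe' : g'.lab (fe e) = Sum.inr A := by rw [hlab e he, hlabe]
  obtain ⟨g₁', ρ', η', R', st', _, _⟩ := exists_step hWF hg' hfe hlabe' hA ∅
  exact ⟨g₁', st', congr_repl hg.1 (hWF.2.2.2.1 A hA).1 he hbV hbE hatt hlab hext R R'⟩

lemma star_iso (hWF : G.WF rkT) {g g' h : HGraph (T ⊕ ℕ)}
    (hg : Good G rkT g) (hg' : Good G rkT g') (iso : g.Isomorphic g')
    (st : Relation.ReflTransGen G.Derive g h) :
    ∃ h', Relation.ReflTransGen G.Derive g' h' ∧ h.Isomorphic h' := by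
  induction st with
  | refl => exact ⟨g', Relation.ReflTransGen.refl, iso⟩
  | tail hmh hstep ih =>
    obtain ⟨m', hm', isom⟩ := ih
    obtain ⟨h', hst', isoh⟩ :=
      derive_iso hWF (star_good hWF hg hmh) (star_good hWF hg' hm') isom hstep
    exact ⟨h', hm'.tail hst', isoh⟩

/-- Simulation: a derivation step inside the replaced part lifts to the host graph. -/
lemma sim_step (hWF : G.WF rkT) {k g C g₂ : HGraph (T ⊕ ℕ)} {e₀ : ℕ} {φV φE : ℕ → ℕ}
    (wg : g.WF (G.rk rkT)) (he₀ : e₀ ∈ k.E)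
    (Rk : RSpec k e₀ g C φV φE) (st : G.Derive g g₂) :
    ∃ (C₂ : HGraph (T ⊕ ℕ)) (φV' φE' : ℕ → ℕ),
      G.Derive C C₂ ∧ RSpec k e₀ g₂ C₂ φV' φE' := by
  classical
  obtain ⟨e, he, A, hA, hlabe, ρ, η, R⟩ := st
  obtain ⟨kρ, kη, kfr, kext, kfrE, kV, kE, kold, knew, kxt⟩ := Rk
  obtain ⟨hρ, hη, hfr, hextm, hfrE, hV, hE, hold, hnew, hxt⟩ := R
  obtain ⟨hrwf, hrlen⟩ := hWF.2.2.2.1 A hA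
  set hs := G.rhs A with hhs
  set N := C.V.sup id + 1 with hN
  set Mb := (C.E ∪ k.E).sup id + 1 with hMb
  set ρ2 : ℕ → ℕ := fun v => if v ∈ hs.ext then φV (ρ v) else N + v with hρ2
  set η2 : ℕ → ℕ := fun x => Mb + x with hη2
  have hφVsub : ∀ x ∈ g.V, φV x ∈ C.V := fun x hx =>
    kV ▸ Finset.mem_union_right _ (Finset.mem_image_of_mem φV hx)
  have hρg : ∀ v ∈ hs.ext, ρ v ∈ g.V := fun v hv =>
    (wg.2.1 e he).1 _ (hextm ▸ List.mem_map_of_mem hv)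
  have hNfr : ∀ x, N ≤ x → x ∉ C.V := by
    intro x hx hmem
    have := Finset.le_sup (f := id) hmem
    simp only [id] at this; omega
  have hMfrC : ∀ x, Mb ≤ x → x ∉ C.E := by
    intro x hx hmem
    have := Finset.le_sup (f := id) (Finset.mem_union_left k.E hmem)
    simp only [id] at this; omega
  have hMfrk : ∀ x, Mb ≤ x → x ∉ k.E := by
    intro x hx hmem
    have := Finset.le_sup (f := id) (Finset.mem_union_right C.E hmem)
    simp only [id] at this; omega
  have hCatt : C.att (φE e) = (g.att e).map φV := (knew e he).1
  have hφEeC : φE e ∈ C.E := kE ▸ Finset.mem_union_right _ (Finset.mem_image_of_mem φE he)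
  -- data conditions for the replacement in C
  have d1 : Set.InjOn ρ2 ↑hs.V := by
    intro x hx y hy hxy
    by_cases hxe : x ∈ hs.ext <;> by_cases hye : y ∈ hs.ext <;>
      simp only [hρ2, hxe, hye, if_pos, if_neg, if_true, if_false] at hxy
    · exact hρ hx hy (kρ (hρg x hxe) (hρg y hye) hxy)
    · exfalso
      have h1 : φV (ρ x) ∈ C.V := hφVsub _ (hρg x hxe)
      rw [hxy] at h1
      exact hNfr (N + y) (by omega) h1
    · exfalso
      have h1 : φV (ρ y) ∈ C.V := hφVsub _ (hρg y hye)
      rw [← hxy] at h1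
      exact hNfr (N + x) (by omega) h1
    · omega
  have d2 : Set.InjOn η2 ↑hs.E := by intro x _ y _ h; simp only [hη2] at h; omega
  have d3 : ∀ v ∈ hs.V, v ∉ hs.ext → ρ2 v ∉ C.V := by
    intro v _ hv
    simp only [hρ2, hv, if_neg, if_false]
    exact hNfr _ (by omega)
  have d4 : hs.ext.map ρ2 = C.att (φE e) := by
    rw [hCatt, ← hextm, List.map_map]
    apply List.map_congr_left
    intro a ha
    simp only [hρ2, ha, if_pos, Function.comp_apply]
  have d5 : ∀ x ∈ hs.E, η2 x ∉ C.E := fun x _ => hMfrC _ (by simp only [hη2]; omega)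
  have R2' := repl_rspec (g := C) (e₀ := φE e) d1 d2 d3 d4 d5
  set C₂ := repl C (φE e) hs ρ2 η2 with hC₂
  obtain ⟨c1, c2, c3, c4, c5, c6, c7, c8, c9, c10⟩ := R2'
  set φV' : ℕ → ℕ := fun x => if x ∈ g.V then φV x else ρ2 (Function.invFunOn ρ ↑hs.V x)
    with hφV'
  set φE' : ℕ → ℕ := fun x => if x ∈ g.E then φE x else η2 (Function.invFunOn η ↑hs.E x)
    with hφE'
  have hφold : ∀ x ∈ g.V, φV' x = φV x := fun x hx => by simp only [hφV', hx, if_pos]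
  have hφEold : ∀ x ∈ g.E, φE' x = φE x := fun x hx => by simp only [hφE', hx, if_pos]
  have hφρ : ∀ v ∈ hs.V, φV' (ρ v) = ρ2 v := by
    intro v hv
    by_cases hvg : ρ v ∈ g.V
    · have hvext : v ∈ hs.ext := by
        by_contra hne
        exact hfr v hv hne hvg
      simp only [hφV', hvg, if_pos, hρ2, hvext]
    · simp only [hφV', hvg, if_neg, if_false]
      rw [hρ.leftInvOn_invFunOn hv]
  have hφη : ∀ x ∈ hs.E, φE' (η x) = η2 x := by
    intro x hx
    have : η x ∉ g.E := hfrE x hx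
    simp only [hφE', this, if_neg, if_false]
    rw [hη.leftInvOn_invFunOn hx]
  have hcase : ∀ x ∈ g₂.V, x ∈ g.V ∨ ∃ v ∈ hs.V, v ∉ hs.ext ∧ ρ v = x := by
    intro x hx
    rw [hV] at hx
    rcases Finset.mem_union.1 hx with h' | h'
    · exact Or.inl h'
    · obtain ⟨v, hv, rfl⟩ := Finset.mem_image.1 h'
      by_cases hvg : ρ v ∈ g.V
      · exact Or.inl hvg
      · exact Or.inr ⟨v, hv, fun hc => hvg (hρg v hc), rfl⟩
  have hcaseE : ∀ x ∈ g₂.E, (x ∈ g.E ∧ x ≠ e) ∨ ∃ y ∈ hs.E, η y = x := by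
    intro x hx
    rw [hE] at hx
    rcases Finset.mem_union.1 hx with h' | h'
    · exact Or.inl ⟨Finset.mem_of_mem_erase h', (Finset.mem_erase.1 h').1⟩
    · obtain ⟨y, hy, rfl⟩ := Finset.mem_image.1 h'
      exact Or.inr ⟨y, hy, rfl⟩
  have hρ2int : ∀ v ∈ hs.V, v ∉ hs.ext → ρ2 v = N + v := by
    intro v _ hv; simp only [hρ2, hv, if_neg, if_false]
  refine ⟨C₂, φV', φE',
    ⟨φE e, hφEeC, A, hA, (knew e he).2.trans hlabe, ρ2, η2,
      ⟨c1, c2, c3, c4, c5, c6, c7, c8, c9, c10⟩⟩, ?_, ?_, ?_, ?_, ?_, ?_, ?_, ?_, ?_, ?_⟩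
  -- 1 InjOn φV'
  · intro x hx y hy hxy
    rcases hcase x hx with h1 | ⟨v, hv, hvi, rfl⟩ <;> rcases hcase y hy with h2 | ⟨w, hw, hwi, rfl⟩
    · rw [hφold x h1, hφold y h2] at hxy
      exact kρ h1 h2 hxy
    · exfalso
      rw [hφold x h1, hφρ w hw, hρ2int w hw hwi] at hxy
      exact hNfr (N + w) (by omega) (hxy ▸ hφVsub x h1)
    · exfalso
      rw [hφold y h2, hφρ v hv, hρ2int v hv hvi] at hxy
      exact hNfr (N + v) (by omega) (hxy ▸ hφVsub y h2)
    · rw [hφρ v hv, hρ2int v hv hvi, hφρ w hw, hρ2int w hw hwi] at hxy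
      have : v = w := by omega
      rw [this]
  -- 2 InjOn φE'
  · intro x hx y hy hxy
    rcases hcaseE x hx with ⟨h1, _⟩ | ⟨v, hv, rfl⟩ <;> rcases hcaseE y hy with ⟨h2, _⟩ | ⟨w, hw, rfl⟩
    · rw [hφEold x h1, hφEold y h2] at hxy
      exact kη h1 h2 hxy
    · exfalso
      rw [hφEold x h1, hφη w hw] at hxy
      have : φE x ∈ C.E := kE ▸ Finset.mem_union_right _ (Finset.mem_image_of_mem φE h1)
      exact hMfrC (η2 w) (by simp only [hη2]; omega) (hxy ▸ this)
    · exfalso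
      rw [hφEold y h2, hφη v hv] at hxy
      have : φE y ∈ C.E := kE ▸ Finset.mem_union_right _ (Finset.mem_image_of_mem φE h2)
      exact hMfrC (η2 v) (by simp only [hη2]; omega) (hxy.symm ▸ this)
    · rw [hφη v hv, hφη w hw] at hxy
      simp only [hη2] at hxy
      have : v = w := by omega
      rw [this]
  -- 3 freshness of internal nodes w.r.t. k
  · intro v hv hvx
    have hvx' : v ∉ g.ext := by rwa [hxt] at hvx
    rcases hcase v hv with h1 | ⟨w, hw, hwi, rfl⟩
    · rw [hφold v h1]
      exact kfr v h1 hvx'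
    · rw [hφρ w hw, hρ2int w hw hwi]
      intro hc
      exact hNfr (N + w) (by omega) (kV ▸ Finset.mem_union_left _ hc)
  -- 4 external nodes map to the attachment of e₀
  · rw [hxt, ← kext]
    apply List.map_congr_left
    intro a ha
    exact hφold a (wg.2.2.1 a ha)
  -- 5 edge freshness w.r.t. k
  · intro x hx
    rcases hcaseE x hx with ⟨h1, _⟩ | ⟨y, hy, rfl⟩
    · rw [hφEold x h1]
      exact kfrE x h1
    · rw [hφη y hy]
      exact hMfrk _ (by simp only [hη2]; omega)
  -- 6 node set
  · rw [c6, kV, hV, Finset.image_union, Finset.image_image]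
    have e1 : g.V.image φV' = g.V.image φV := Finset.image_congr fun x hx => hφold x hx
    have e2 : hs.V.image (φV' ∘ ρ) = hs.V.image ρ2 :=
      Finset.image_congr fun x hx => hφρ x hx
    rw [e1, e2, Finset.union_assoc]
  -- 7 edge set
  · rw [c7, kE, hE, Finset.erase_union_distrib, Finset.image_union, Finset.image_image]
    have e0 : (k.E.erase e₀).erase (φE e) = k.E.erase e₀ :=
      Finset.erase_eq_of_notMem fun hc => kfrE e he (Finset.mem_of_mem_erase hc)
    have e1 : (g.E.image φE).erase (φE e) = (g.E.erase e).image φE := image_erase_injOn kη he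
    have e2 : (g.E.erase e).image φE' = (g.E.erase e).image φE :=
      Finset.image_congr fun x hx => hφEold x (Finset.mem_of_mem_erase hx)
    have e3 : hs.E.image (φE' ∘ η) = hs.E.image η2 :=
      Finset.image_congr fun x hx => hφη x hx
    rw [e0, e1, e2, e3, Finset.union_assoc]
  -- 8 untouched edges of k
  · intro x hx
    have hxC : x ∈ C.E.erase (φE e) := by
      refine Finset.mem_erase.2 ⟨?_, kE ▸ Finset.mem_union_left _ hx⟩
      intro hc
      exact kfrE e he (hc ▸ Finset.mem_of_mem_erase hx)
    obtain ⟨a8, l8⟩ := c8 x hxC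
    obtain ⟨a8', l8'⟩ := kold x hx
    exact ⟨a8.trans a8', l8.trans l8'⟩
  -- 9 edges of g₂
  · intro x hx
    rcases hcaseE x hx with ⟨h1, h2⟩ | ⟨y, hy, rfl⟩
    · have hxE : x ∈ g.E.erase e := Finset.mem_erase.2 ⟨h2, h1⟩
      have hC : φE x ∈ C.E.erase (φE e) := by
        refine Finset.mem_erase.2 ⟨fun hc => h2 (kη h1 he hc),
          kE ▸ Finset.mem_union_right _ (Finset.mem_image_of_mem φE h1)⟩
      obtain ⟨a8, l8⟩ := c8 (φE x) hC
      rw [hφEold x h1]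
      constructor
      · rw [a8, (knew x h1).1, (hold x hxE).1]
        apply List.map_congr_left
        intro a ha
        exact (hφold a ((wg.2.1 x h1).1 a ha)).symm
      · rw [l8, (knew x h1).2, (hold x hxE).2]
    · obtain ⟨a9, l9⟩ := c9 y hy
      rw [hφη y hy]
      constructor
      · rw [a9, (hnew y hy).1, List.map_map]
        apply List.map_congr_left
        intro a ha
        exact (hφρ a ((hrwf.2.1 y hy).1 a ha)).symm
      · rw [l9, (hnew y hy).2]
  -- 10 external nodes
  · rw [c10, kxt]

end Sim
section Sim2

variable {G : HRGrammar T} {rkT : T → ℕ}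

lemma sim_star (hWF : G.WF rkT) {k g C h : HGraph (T ⊕ ℕ)} {e₀ : ℕ} {φV φE : ℕ → ℕ}
    (hg : Good G rkT g) (he₀ : e₀ ∈ k.E)
    (Rk : RSpec k e₀ g C φV φE) (st : Relation.ReflTransGen G.Derive g h) :
    ∃ (C' : HGraph (T ⊕ ℕ)) (φV' φE' : ℕ → ℕ),
      Relation.ReflTransGen G.Derive C C' ∧ RSpec k e₀ h C' φV' φE' := by
  induction st with
  | refl => exact ⟨C, φV, φE, Relation.ReflTransGen.refl, Rk⟩
  | tail hmh hstep ih =>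
    obtain ⟨C', φV', φE', hC', R'⟩ := ih
    obtain ⟨C₂, φV₂, φE₂, hst₂, R₂⟩ :=
      sim_step hWF (star_good hWF hg hmh).1 he₀ R' hstep
    exact ⟨C₂, φV₂, φE₂, hC'.tail hst₂, R₂⟩

/-- Commutation: a derivation step on the host graph (away from the replaced edge)
lifts coherently. -/
lemma outer_step (hWF : G.WF rkT) {k g C : HGraph (T ⊕ ℕ)} {e₀ e B : ℕ} {φV φE : ℕ → ℕ}
    (wk : k.WF (G.rk rkT)) (he₀ : e₀ ∈ k.E)
    (Rk : RSpec k e₀ g C φV φE)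
    (he : e ∈ k.E) (hne : e ≠ e₀) (hlab : k.lab e = Sum.inr B) (hB : B ∈ G.NT) :
    ∃ (k₂ C₂ : HGraph (T ⊕ ℕ)) (ρ η : ℕ → ℕ),
      RSpec k e (G.rhs B) k₂ ρ η ∧ G.Derive k k₂ ∧ G.Derive C C₂ ∧
      RSpec k₂ e₀ g C₂ φV φE ∧ e₀ ∈ k₂.E ∧ k₂.lab e₀ = k.lab e₀ := by
  classical
  obtain ⟨kρ, kη, kfr, kext, kfrE, kV, kE, kold, knew, kxt⟩ := Rk
  obtain ⟨hrwf, hrlen⟩ := hWF.2.2.2.1 B hB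
  set hsB := G.rhs B with hhsB
  obtain ⟨m1, m2, m3, m4⟩ := wk.2.1 e he
  have hlen : hsB.ext.length = (k.att e).length := by rw [hrlen, m3, hlab]; rfl
  obtain ⟨ρ, η, x1, x2, x3, x4, x5⟩ :=
    exists_data k e hsB (C.V ∪ C.E) hlen hrwf.2.2.2 hrwf.2.2.1 m2 m1
  have x3k : ∀ v ∈ hsB.V, v ∉ hsB.ext → ρ v ∉ k.V := by
    intro v hv hve hmem
    exact x3 v hv hve (Finset.mem_union_left _ hmem)
  have x3C : ∀ v ∈ hsB.V, v ∉ hsB.ext → ρ v ∉ C.V := by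
    intro v hv hve hmem
    exact x3 v hv hve (Finset.mem_union_right _ (Finset.mem_union_left _ hmem))
  have x5k : ∀ y ∈ hsB.E, η y ∉ k.E := by
    intro y hy hmem
    exact x5 y hy (Finset.mem_union_left _ hmem)
  have x5C : ∀ y ∈ hsB.E, η y ∉ C.E := by
    intro y hy hmem
    exact x5 y hy (Finset.mem_union_right _ (Finset.mem_union_right _ hmem))
  have heC : e ∈ C.E := kE ▸ Finset.mem_union_left _ (Finset.mem_erase.2 ⟨hne, he⟩)
  have hkolde := kold e (Finset.mem_erase.2 ⟨hne, he⟩)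
  have x4C : hsB.ext.map ρ = C.att e := by rw [x4, hkolde.1]
  have Rk₂ := repl_rspec (g := k) (e₀ := e) x1 x2 x3k x4 x5k
  have RC₂ := repl_rspec (g := C) (e₀ := e) x1 x2 x3C x4C x5C
  set k₂ := repl k e hsB ρ η with hk₂
  set C₂ := repl C e hsB ρ η with hC₂
  obtain ⟨p1, p2, p3, p4, p5, p6, p7, p8, p9, p10⟩ := Rk₂
  obtain ⟨q1, q2, q3, q4, q5, q6, q7, q8, q9, q10⟩ := RC₂
  have he₀k₂ : e₀ ∈ k₂.E := by
    rw [p7]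
    exact Finset.mem_union_left _ (Finset.mem_erase.2 ⟨Ne.symm hne, he₀⟩)
  have hp8e₀ := p8 e₀ (Finset.mem_erase.2 ⟨Ne.symm hne, he₀⟩)
  have hφEC : ∀ x ∈ g.E, φE x ∈ C.E := fun x hx =>
    kE ▸ Finset.mem_union_right _ (Finset.mem_image_of_mem φE hx)
  have hφEne : ∀ x ∈ g.E, φE x ≠ e := fun x hx hc => kfrE x hx (hc ▸ he)
  refine ⟨k₂, C₂, ρ, η,
    ⟨p1, p2, p3, p4, p5, p6, p7, p8, p9, p10⟩,
    ⟨e, he, B, hB, hlab, ρ, η, ⟨p1, p2, p3, p4, p5, p6, p7, p8, p9, p10⟩⟩,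
    ⟨e, heC, B, hB, hkolde.2.trans hlab, ρ, η,
      ⟨q1, q2, q3, q4, q5, q6, q7, q8, q9, q10⟩⟩,
    ⟨kρ, kη, ?_, ?_, ?_, ?_, ?_, ?_, ?_, ?_⟩, he₀k₂, hp8e₀.2⟩
  -- 3 freshness of internal nodes w.r.t. k₂
  · intro v hv hve hmem
    rw [p6] at hmem
    rcases Finset.mem_union.1 hmem with h' | h'
    · exact kfr v hv hve h'
    · obtain ⟨w, hw, hww⟩ := Finset.mem_image.1 h'
      by_cases hwe : w ∈ hsB.ext
      · have : ρ w ∈ k.att e := x4 ▸ List.mem_map_of_mem hwe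
        have : ρ w ∈ k.V := m1 _ this
        rw [hww] at this
        exact kfr v hv hve this
      · have : ρ w ∉ C.V := x3C w hw hwe
        rw [hww] at this
        exact this (kV ▸ Finset.mem_union_right _ (Finset.mem_image_of_mem φV hv))
  -- 4 external map
  · rw [hp8e₀.1, kext]
  -- 5 edge freshness
  · intro x hx hmem
    rw [p7] at hmem
    rcases Finset.mem_union.1 hmem with h' | h'
    · exact kfrE x hx (Finset.mem_of_mem_erase h')
    · obtain ⟨y, hy, hyy⟩ := Finset.mem_image.1 h'
      have : η y ∉ C.E := x5C y hy
      rw [hyy] at this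
      exact this (hφEC x hx)
  -- 6 node set
  · rw [q6, kV, p6]
    ext x
    simp only [Finset.mem_union]
    tauto
  -- 7 edge set
  · rw [q7, kE, p7, Finset.erase_union_distrib, Finset.erase_union_distrib]
    have e1 : (g.E.image φE).erase e = g.E.image φE := by
      apply Finset.erase_eq_of_notMem
      simp only [Finset.mem_image]
      rintro ⟨x, hx, hxe⟩
      exact hφEne x hx hxe
    have e2 : (hsB.E.image η).erase e₀ = hsB.E.image η := by
      apply Finset.erase_eq_of_notMem
      simp only [Finset.mem_image]
      rintro ⟨y, hy, hye⟩
      exact x5k y hy (hye ▸ he₀)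
    rw [e1, e2, Finset.erase_right_comm]
    ext x
    simp only [Finset.mem_union]
    tauto
  -- 8 untouched edges of k₂
  · intro x hx
    obtain ⟨hxe₀, hxk₂⟩ := Finset.mem_erase.1 hx
    rw [p7] at hxk₂
    rcases Finset.mem_union.1 hxk₂ with h' | h'
    · obtain ⟨hxe, hxk⟩ := Finset.mem_erase.1 h'
      have hxC : x ∈ C.E.erase e := by
        refine Finset.mem_erase.2 ⟨hxe, ?_⟩
        exact kE ▸ Finset.mem_union_left _ (Finset.mem_erase.2 ⟨hxe₀, hxk⟩)
      obtain ⟨qa, ql⟩ := q8 x hxC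
      obtain ⟨ka, kl⟩ := kold x (Finset.mem_erase.2 ⟨hxe₀, hxk⟩)
      obtain ⟨pa, pl⟩ := p8 x (Finset.mem_erase.2 ⟨hxe, hxk⟩)
      exact ⟨(qa.trans ka).trans pa.symm, (ql.trans kl).trans pl.symm⟩
    · obtain ⟨y, hy, rfl⟩ := Finset.mem_image.1 h'
      obtain ⟨qa, ql⟩ := q9 y hy
      obtain ⟨pa, pl⟩ := p9 y hy
      exact ⟨qa.trans pa.symm, ql.trans pl.symm⟩
  -- 9 edges of g
  · intro x hx
    have hC : φE x ∈ C.E.erase e := Finset.mem_erase.2 ⟨hφEne x hx, hφEC x hx⟩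
    obtain ⟨qa, ql⟩ := q8 (φE x) hC
    obtain ⟨ka, kl⟩ := knew x hx
    exact ⟨qa.trans ka, ql.trans kl⟩
  -- 10 external nodes
  · rw [q10, kxt, p10]

end Sim2
section Unique

variable {G : HRGrammar T} {rkT : T → ℕ}

lemma terminal_no_step {g h : HGraph (T ⊕ ℕ)} (ht : HRGrammar.Terminal g)
    (st : Relation.ReflTransGen G.Derive g h) : h = g := by
  rcases st.cases_head with heq | ⟨g₁, st1, _⟩
  · exact heq.symm
  · obtain ⟨e, he, A, _, hlabe, _⟩ := st1
    obtain ⟨a, ha⟩ := ht e he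
    rw [ha] at hlabe
    cases hlabe

lemma id_bij {s : Finset ℕ} : Set.BijOn id (↑s : Set ℕ) (↑s : Set ℕ) :=
  Set.bijOn_id ((↑s : Set ℕ))

/-- Uniqueness (up to isomorphism) of terminal graphs derivable from a given graph. -/
lemma unique_terminal (hWF : G.WF rkT) (hSL : G.SL) :
    ∀ n, ∀ g : HGraph (T ⊕ ℕ), M G g.E g ≤ n → Good G rkT g →
    ∀ h h', Relation.ReflTransGen G.Derive g h → Relation.ReflTransGen G.Derive g h' →
    HRGrammar.Terminal h → HRGrammar.Terminal h' → h.Isomorphic h' := by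
  intro n
  induction n with
  | zero =>
    intro g hM hg h h' st1 st2 _ _
    have hterm : HRGrammar.Terminal g := by
      intro e he
      exfalso
      have h1 : (cBase G) ^ (htL G (g.lab e)) ≤ M G g.E g :=
        Finset.single_le_sum (f := fun e => (cBase G) ^ (htL G (g.lab e)))
          (fun _ _ => Nat.zero_le _) he
      have h2 : 0 < (cBase G) ^ (htL G (g.lab e)) := Nat.pow_pos cBase_pos
      omega
    rw [terminal_no_step hterm st1, terminal_no_step hterm st2]
    exact iso_refl g
  | succ n ih =>
    intro g hM hg h h' st1 st2 th th'
    rcases st1.cases_head with heq | ⟨g₁, sta, st1'⟩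
    · have tg : HRGrammar.Terminal g := by rw [heq]; exact th
      have h'g : h' = g := terminal_no_step tg st2
      rw [h'g, ← heq]
      exact iso_refl g
    rcases st2.cases_head with heq | ⟨g₂, stb, st2'⟩
    · exfalso
      have tg : HRGrammar.Terminal g := by rw [heq]; exact th'
      obtain ⟨e, he, A, _, hlabe, _⟩ := sta
      obtain ⟨a, ha⟩ := tg e he
      rw [ha] at hlabe
      cases hlabe
    have hg₁ : Good G rkT g₁ := derive_good hWF hg sta
    have hg₂ : Good G rkT g₂ := derive_good hWF hg stb
    obtain ⟨e₁, he₁, A₁, hA₁, hlab₁, ρ₁, η₁, R₁⟩ := sta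
    obtain ⟨e₂, he₂, A₂, hA₂, hlab₂, ρ₂, η₂, R₂⟩ := stb
    have hM₁ : M G g₁.E g₁ ≤ n := by
      have := M_lt hWF hSL he₁ hA₁ hlab₁ R₁ g.E (Finset.Subset.refl _) he₁
      rw [← R₁.2.2.2.2.2.2.1] at this
      omega
    have hM₂ : M G g₂.E g₂ ≤ n := by
      have := M_lt hWF hSL he₂ hA₂ hlab₂ R₂ g.E (Finset.Subset.refl _) he₂
      rw [← R₂.2.2.2.2.2.2.1] at this
      omega
    by_cases hee : e₁ = e₂
    · subst hee
      have hAA : A₁ = A₂ := by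
        rw [hlab₁] at hlab₂
        exact Sum.inr.inj hlab₂
      subst hAA
      have iso12 : g₁.Isomorphic g₂ :=
        congr_repl (f := id) (fe := id) hg.1 (hWF.2.2.2.1 A₁ hA₁).1 he₁ id_bij id_bij
          (fun e _ => by simp) (fun e _ => rfl) (by simp) R₁ R₂
      obtain ⟨h₁', hst₁', isoh⟩ := star_iso hWF hg₁ hg₂ iso12 st1'
      exact iso_trans isoh
        (ih g₂ hM₂ hg₂ h₁' h' hst₁' st2' (iso_terminal isoh th) th')
    · obtain ⟨k₂, C₂, ρ, η, Rk₂, stk₂, stC₂, RC₂, he₀k₂, hlabk₂⟩ :=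
        outer_step (e := e₂) (B := A₂) hWF hg.1 he₁ R₁ he₂ (Ne.symm hee) hlab₂ hA₂
      have stk₂C₂ : G.Derive k₂ C₂ :=
        ⟨e₁, he₀k₂, A₁, hA₁, hlabk₂.trans hlab₁, ρ₁, η₁, RC₂⟩
      have hgk₂ : Good G rkT k₂ := derive_good hWF hg stk₂
      have hgC₂ : Good G rkT C₂ := derive_good hWF hg₁ stC₂
      obtain ⟨h₃, sth₃, th₃, _⟩ :=
        exists_terminal hWF hSL (M G C₂.E C₂) C₂ (le_refl _) hgC₂
      have iso1 : h.Isomorphic h₃ :=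
        ih g₁ hM₁ hg₁ h h₃ st1' (Relation.ReflTransGen.head stC₂ sth₃) th th₃
      have isok : k₂.Isomorphic g₂ :=
        congr_repl (f := id) (fe := id) hg.1 (hWF.2.2.2.1 A₂ hA₂).1 he₂ id_bij id_bij
          (fun e _ => by simp) (fun e _ => rfl) (by simp) Rk₂ R₂
      obtain ⟨h₃', hsth₃', isoh₃⟩ := star_iso hWF hgk₂ hg₂ isok
        (Relation.ReflTransGen.head stk₂C₂ sth₃)
      have iso2 : h₃'.Isomorphic h' :=
        ih g₂ hM₂ hg₂ h₃' h' hsth₃' st2' (iso_terminal isoh₃ th₃) th'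
      exact iso_trans (iso_trans iso1 isoh₃) iso2

end Unique
section Embed

variable {G : HRGrammar T} {rkT : T → ℕ}

lemma rhs_good (hWF : G.WF rkT) {A : ℕ} (hA : A ∈ G.NT) : Good G rkT (G.rhs A) :=
  ⟨(hWF.2.2.2.1 A hA).1, fun e he B hB => hWF.2.2.2.2.2 A hA e he B hB⟩

/-- Any terminal graph derived from `rhs A` embeds into a member of the language. -/
lemma exists_embedding (hWF : G.WF rkT) (hSL : G.SL) {A : ℕ} (hA : A ∈ G.NT)
    {h₀ : HGraph (T ⊕ ℕ)} (sth : Relation.ReflTransGen G.Derive (G.rhs A) h₀)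
    (th : HRGrammar.Terminal h₀) :
    ∃ (gh : HGraph (T ⊕ ℕ)) (Φ ΦE : ℕ → ℕ),
      gh ∈ G.Lang ∧ Set.InjOn Φ ↑h₀.V ∧
      (∀ v ∈ h₀.V, Φ v ∈ gh.V) ∧
      (∀ e ∈ h₀.E, ΦE e ∈ gh.E) ∧
      (∀ e ∈ h₀.E, gh.att (ΦE e) = (h₀.att e).map Φ) := by
  have GoodS : Good G rkT G.S := ⟨hWF.2.2.1, hWF.2.2.2.2.1⟩
  obtain ⟨B, ⟨eS, heS, hlabS⟩, hdep⟩ := hSL.2 A hA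
  obtain ⟨g₁, stg₁, hg₁, e₁, he₁, hlab₁⟩ := reach hWF hdep G.S GoodS ⟨eS, heS, hlabS⟩
  obtain ⟨k, stk, hk, hek, _, hlabk, hkterm⟩ :=
    exists_context hWF hSL (M G (g₁.E.erase e₁) g₁) g₁ e₁ (le_refl _) hg₁ he₁
  have hlabkA : k.lab e₁ = Sum.inr A := hlabk.trans hlab₁
  obtain ⟨K₀, ρ₀, η₀, RK₀, stK₀, _, _⟩ := exists_step hWF hk hek hlabkA hA ∅
  obtain ⟨gh, Φ, ΦE, stgh, Rgh⟩ := sim_star hWF (rhs_good hWF hA) hek RK₀ sth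
  have hE := Rgh.2.2.2.2.2.2.1
  have hVeq := Rgh.2.2.2.2.2.1
  refine ⟨gh, Φ, ΦE, ⟨?_, ?_⟩, Rgh.1,
    (fun v hv => hVeq ▸ Finset.mem_union_right _ (Finset.mem_image_of_mem Φ hv)), ?_,
    fun e he => (Rgh.2.2.2.2.2.2.2.2.1 e he).1⟩
  · exact ((stg₁.trans stk).tail stK₀).trans stgh
  · intro e he
    rw [hE] at he
    rcases Finset.mem_union.1 he with h' | h'
    · have hlabe := (Rgh.2.2.2.2.2.2.2.1 e h').2
      obtain ⟨a, ha⟩ := hkterm e (Finset.mem_of_mem_erase h') (Finset.mem_erase.1 h').1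
      exact ⟨a, hlabe.trans ha⟩
    · obtain ⟨x, hx, rfl⟩ := Finset.mem_image.1 h'
      have hlabe := (Rgh.2.2.2.2.2.2.2.2.1 x hx).2
      obtain ⟨a, ha⟩ := th x hx
      exact ⟨a, hlabe.trans ha⟩
  · intro e he
    rw [hE]
    exact Finset.mem_union_right _ (Finset.mem_image_of_mem ΦE he)

end Embed
section Tree

variable {L : Type}

lemma lex_of_proper_prefix : ∀ (u t : List ℕ), t ≠ [] → List.Lex (· < ·) u (u ++ t) := by
  intro u
  induction u with
  | nil =>
    intro t ht
    cases t with
    | nil => exact absurd rfl ht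
    | cons a l => exact List.Lex.nil
  | cons a u ih =>
    intro t ht
    exact List.Lex.cons (ih t ht)

lemma pos_lt_pos (t : RankedTree L) {u v : List ℕ} (hu : u ∈ t.D) (hv : v ∈ t.D)
    (hlex : List.Lex (· < ·) u v) : t.pos u < t.pos v := by
  apply Finset.card_lt_card
  constructor
  · intro w hw
    obtain ⟨hw1, hw2⟩ := Finset.mem_filter.1 hw
    exact Finset.mem_filter.2 ⟨hw1, List.lex_trans (fun h1 h2 => Nat.lt_trans h1 h2) hw2 hlex⟩
  · intro hback
    have : u ∈ t.D.filter fun w => List.Lex (· < ·) w v := Finset.mem_filter.2 ⟨hu, hlex⟩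
    have := hback this
    exact irrefl _ (Finset.mem_filter.1 this).2

lemma pos_injOn (t : RankedTree L) {u v : List ℕ} (hu : u ∈ t.D) (hv : v ∈ t.D)
    (h : t.pos u = t.pos v) : u = v := by
  haveI : IsTrichotomous (List ℕ) (List.Lex (· < ·)) := List.Lex.trichotomous _
  rcases trichotomous_of (List.Lex (· < ·)) u v with hl | he | hl
  · exact absurd h (Nat.ne_of_lt (pos_lt_pos t hu hv hl))
  · exact he
  · exact absurd h.symm (Nat.ne_of_lt (pos_lt_pos t hv hu hl))

lemma pos_lt_card (t : RankedTree L) {u : List ℕ} (hu : u ∈ t.D) : t.pos u < t.D.card := by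
  apply Finset.card_lt_card
  constructor
  · exact Finset.filter_subset _ _
  · intro hback
    have := hback hu
    exact irrefl _ (Finset.mem_filter.1 this).2

lemma pos_surj (t : RankedTree L) {n : ℕ} (hn : n < t.D.card) : ∃ u ∈ t.D, t.pos u = n := by
  classical
  have hinj : Set.InjOn t.pos ↑t.D := fun u hu v hv h => pos_injOn t hu hv h
  have hcard : (t.D.image t.pos).card = t.D.card := Finset.card_image_of_injOn hinj
  have hsub : t.D.image t.pos ⊆ Finset.range t.D.card := by
    intro x hx
    obtain ⟨u, hu, rfl⟩ := Finset.mem_image.1 hx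
    exact Finset.mem_range.2 (pos_lt_card t hu)
  have heq : t.D.image t.pos = Finset.range t.D.card :=
    Finset.eq_of_subset_of_card_le hsub (by rw [hcard, Finset.card_range])
  have : n ∈ t.D.image t.pos := heq ▸ Finset.mem_range.2 hn
  obtain ⟨u, hu, hup⟩ := Finset.mem_image.1 this
  exact ⟨u, hu, hup⟩

/-- Paths in a tree-graph go from a node to a proper descendant, visiting exactly the
nodes strictly in between on the ancestor chain. -/
lemma tree_path {rk : L → ℕ} {t : RankedTree L} {g₀ : HGraph L}
    (wfT : t.WF rk) (hT : IsTGraphOf rk t g₀) :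
    ∀ (p : List ℕ) (s tt : ℕ), g₀.IsPath p s tt →
    ∃ ws wt, ws ∈ t.D ∧ wt ∈ t.D ∧ s = t.pos ws ∧ tt = t.pos wt ∧
      ws <+: wt ∧ ws.length < wt.length ∧
      (∀ w ∈ t.D, ws <+: w → w.length ≠ ws.length → w <+: wt → w.length ≠ wt.length →
        ∃ e ∈ p.tail, (g₀.att e).head? = some (t.pos w)) := by
  obtain ⟨hV, hE, hatt, hext⟩ := hT
  intro p
  induction p with
  | nil => intro s tt hp; exact absurd rfl hp.1
  | cons e p' ih =>
    intro s tt hp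
    obtain ⟨hne, hmem, ⟨e', hh1, hh2⟩, hchain, ⟨el, hl1, hl2⟩⟩ := hp
    have hee' : e' = e := by
      rw [List.head?_cons] at hh1
      exact (Option.some.inj hh1).symm
    subst hee'
    have heE : e' ∈ g₀.E := hmem e' (List.mem_cons_self)
    obtain ⟨u, huD, hue⟩ := pos_surj t (Finset.mem_range.1 (hE ▸ heE))
    obtain ⟨hattu, hlabu⟩ := hatt u huD
    have hs : s = t.pos u := by
      rw [← hue, hattu] at hh2
      exact (Option.some.inj hh2).symm
    have htail : ∀ x, x ∈ (g₀.att e').tail →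
        ∃ j, j < rk (t.lab u) - 1 ∧ x = t.pos (u ++ [j + 1]) ∧ u ++ [j + 1] ∈ t.D := by
      intro x hx
      rw [← hue, hattu] at hx
      simp only [List.tail_cons, List.mem_map, List.mem_range] at hx
      obtain ⟨j, hj, rfl⟩ := hx
      exact ⟨j, hj, rfl, wfT.2.2 u huD (j + 1) (by omega) (by omega)⟩
    cases p' with
    | nil =>
      have hel : el = e' := by
        simp only [List.getLast?_singleton] at hl1
        exact (Option.some.inj hl1).symm
      subst hel
      obtain ⟨j, hj, htt, hchild⟩ := htail tt hl2
      refine ⟨u, u ++ [j + 1], huD, hchild, hs, htt, ⟨[j + 1], rfl⟩, by simp, ?_⟩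
      intro w _ hw1 hw2 hw3 hw4
      exfalso
      have l3 : (u ++ [j + 1]).length = u.length + 1 := by simp
      have l1 := hw1.length_le
      have l2 := hw3.length_le
      rw [l3] at l2 hw4
      omega
    | cons e₂ rest =>
      have hchain2 := List.isChain_cons_cons.1 hchain
      obtain ⟨v, hv1, hv2⟩ := hchain2.1
      have hp' : g₀.IsPath (e₂ :: rest) v tt := by
        refine ⟨by simp, fun x hx => hmem x (List.mem_cons_of_mem _ hx),
          ⟨e₂, rfl, hv1⟩, hchain2.2, ⟨el, ?_, hl2⟩⟩
        rw [← hl1, List.getLast?_cons_cons]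
      obtain ⟨ws', wt, hws'D, hwtD, hveq, htteq, hpre', hlen', hbet'⟩ := ih v tt hp'
      obtain ⟨j, hj, hvy, hchild⟩ := htail v hv2
      have hws' : ws' = u ++ [j + 1] := by
        apply pos_injOn t hws'D hchild
        rw [← hveq, hvy]
      refine ⟨u, wt, huD, hwtD, hs, htteq, ?_, ?_, ?_⟩
      · exact (show u <+: ws' by rw [hws']; exact ⟨[j + 1], rfl⟩).trans hpre'
      · have : ws'.length = u.length + 1 := by rw [hws']; simp
        omega
      · intro w hwD hw1 hw2 hw3 hw4
        have hcomp : w <+: ws' ∨ ws' <+: w := List.prefix_or_prefix_of_prefix hw3 hpre'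
      -- compare lengths
        have hlws' : ws'.length = u.length + 1 := by rw [hws']; simp
        rcases hcomp with hc | hc
        · -- w is a prefix of ws', so w = ws' by lengths
          have h1 := hc.length_le
          have h2 := hw1.length_le
          have hweq : w = ws' := hc.eq_of_length (by omega)
          refine ⟨e₂, List.mem_cons_self, ?_⟩
          rw [hv1, hweq, ← hveq]
        · by_cases hlen : w.length = ws'.length
          · have hweq : w = ws' := (hc.eq_of_length hlen.symm).symm
            refine ⟨e₂, List.mem_cons_self, ?_⟩
            rw [hv1, hweq, ← hveq]
          · obtain ⟨e₃, he₃, hh⟩ := hbet' w hwD hc (fun hcc => hlen hcc) hw3 hw4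
            exact ⟨e₃, List.mem_of_mem_tail he₃, hh⟩

/-- Transport of paths along attachment-preserving maps. -/
lemma path_map {g g' : HGraph L} {f fe : ℕ → ℕ}
    (hmem : ∀ e ∈ g.E, fe e ∈ g'.E)
    (hatt : ∀ e ∈ g.E, g'.att (fe e) = (g.att e).map f)
    {p : List ℕ} {s tt : ℕ} (hp : g.IsPath p s tt) :
    g'.IsPath (p.map fe) (f s) (f tt) := by
  obtain ⟨hne, hmm, ⟨e, hh1, hh2⟩, hchain, ⟨el, hl1, hl2⟩⟩ := hp
  have heE : e ∈ g.E := hmm e (List.mem_of_mem_head? hh1)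
  have helE : el ∈ g.E := hmm el (List.mem_of_mem_getLast? hl1)
  refine ⟨by simp [hne], ?_, ⟨fe e, ?_, ?_⟩, ?_, ⟨fe el, ?_, ?_⟩⟩
  · intro x hx
    obtain ⟨y, hy, rfl⟩ := List.mem_map.1 hx
    exact hmem y (hmm y hy)
  · rw [List.head?_map, hh1]; rfl
  · rw [hatt e heE, List.head?_map, hh2]; rfl
  · -- chain'
    clear hh1 hh2 hl1 hl2 hne heE helE
    induction p with
    | nil => exact List.isChain_nil
    | cons a p ih =>
      cases p with
      | nil => exact List.isChain_singleton _
      | cons b rest =>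
        have haE : a ∈ g.E := hmm a (List.mem_cons_self)
        have hbE : b ∈ g.E := hmm b (List.mem_cons_of_mem _ (List.mem_cons_self))
        have hch := List.isChain_cons_cons.1 hchain
        obtain ⟨v, hv1, hv2⟩ := hch.1
        refine List.isChain_cons_cons.2 ⟨⟨f v, ?_, ?_⟩, ?_⟩
        · rw [hatt b hbE, List.head?_map, hv1]; rfl
        · rw [hatt a haE, ← List.map_tail]
          exact List.mem_map_of_mem hv2
        · exact ih (fun x hx => hmm x (List.mem_cons_of_mem _ hx)) hch.2
  · rw [List.getLast?_map, hl1]; rfl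
  · rw [hatt el helE, ← List.map_tail]
    exact List.mem_map_of_mem hl2

end Tree
section Final

lemma map_self_eq {α : Type*} {f : α → α} : ∀ (l : List α), l = l.map f → ∀ x ∈ l, f x = x := by
  intro l
  induction l with
  | nil => intro _ x hx; cases hx
  | cons a l ih =>
    intro h x hx
    simp only [List.map_cons, List.cons.injEq] at h
    rcases List.mem_cons.1 hx with rfl | hx
    · exact h.1.symm
    · exact ih h.2 x hx

end Final

end S4

/-- For a tree-generating SL-HR grammar `G`, the
line-structure `ls(A)` of every nonterminal `A` is a rooted forest: it is
acyclic and every node has in-degree at most one. -/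
theorem line_structure_is_rooted_forest {T : Type} (rkT : T → ℕ)
    (G : HRGrammar T) (hWF : G.WF rkT) (hSL : G.SL)
    (hTree : ∀ g ∈ G.Lang, IsTreeGraph (G.rk rkT) g) :
    ∀ A ∈ G.NT,
      (∀ u : ℕ, ¬ Relation.TransGen (lsRel G A) u u) ∧
      (∀ v u w : ℕ, lsRel G A u v → lsRel G A w v → u = w) := by
  classical
  intro A hA
  -- fixed terminal expansion of rhs A
  obtain ⟨h₀, sth₀, th₀, Gh₀⟩ := S4.exists_terminal hWF hSL (S4.M G (G.rhs A).E (G.rhs A))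
    (G.rhs A) (le_refl _) (S4.rhs_good hWF hA)
  have hext₀ : h₀.ext = (G.rhs A).ext := S4.star_ext sth₀
  -- every ls-edge is witnessed by an internal path in h₀
  have KEY : ∀ u v : ℕ, lsRel G A u v → u ∈ h₀.ext ∧ v ∈ h₀.ext ∧
      ∃ p, h₀.InternalPath p u v := by
    rintro u v ⟨hu, hv, h₁, st₁, t₁, p, ⟨hpath, hint⟩⟩
    have h₁ext : h₁.ext = (G.rhs A).ext := S4.star_ext st₁
    have Gh₁ : S4.Good G rkT h₁ := S4.star_good hWF (S4.rhs_good hWF hA) st₁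
    have iso : h₁.Isomorphic h₀ := S4.unique_terminal hWF hSL (S4.M G (G.rhs A).E (G.rhs A))
      (G.rhs A) (le_refl _) (S4.rhs_good hWF hA) h₁ h₀ st₁ sth₀ t₁ th₀
    obtain ⟨f, fe, hbV, hbE, hatt, hlab, hxt⟩ := iso
    have hexteq : h₁.ext = h₁.ext.map f := by
      conv_lhs => rw [h₁ext, ← hext₀, hxt]
    have hfix : ∀ x ∈ h₁.ext, f x = x := S4.map_self_eq h₁.ext hexteq
    have hu₁ : u ∈ h₁.ext := h₁ext ▸ hu
    have hv₁ : v ∈ h₁.ext := h₁ext ▸ hv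
    have hmemE : ∀ e ∈ h₁.E, fe e ∈ h₀.E := fun e he => hbE.1 he
    have hP : h₀.IsPath (p.map fe) (f u) (f v) := S4.path_map hmemE hatt hpath
    rw [hfix u hu₁, hfix v hv₁] at hP
    refine ⟨hext₀ ▸ hu, hext₀ ▸ hv, p.map fe, hP, ?_⟩
    intro e he z hz
    rw [← List.map_tail] at he
    obtain ⟨x, hx, rfl⟩ := List.mem_map.1 he
    have hxE : x ∈ h₁.E := hpath.2.1 x (List.mem_of_mem_tail hx)
    rw [hatt x hxE, List.head?_map] at hz
    obtain ⟨z₁, hz₁, rfl⟩ := Option.map_eq_some_iff.1 hz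
    have hz₁V : z₁ ∈ h₁.V := (Gh₁.1.2.1 x hxE).1 z₁ (List.mem_of_mem_head? hz₁)
    have hz₁ne : z₁ ∉ h₁.ext := hint x hx z₁ hz₁
    intro hmem
    rw [hxt] at hmem
    obtain ⟨y, hy, hyz⟩ := List.mem_map.1 hmem
    have hyV : y ∈ h₁.V := Gh₁.1.2.2.1 y hy
    exact hz₁ne (hbV.2.1 hz₁V hyV hyz.symm ▸ hy)
  -- embed h₀ into a tree of the language
  obtain ⟨gh, Φ, ΦE, hLang, hΦinj, hΦV, hΦEm, hΦatt⟩ :=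
    S4.exists_embedding hWF hSL hA sth₀ th₀
  obtain ⟨t, wfT, g₀, hTG, isoG⟩ := hTree gh hLang
  obtain ⟨fh, fhe, bV, bE, batt, blab, bxt⟩ := isoG
  set Ψ : ℕ → ℕ := fun x => fh (Φ x) with hΨ
  set ΨE : ℕ → ℕ := fun x => fhe (ΦE x) with hΨE
  have hmem2 : ∀ e ∈ h₀.E, ΨE e ∈ g₀.E := fun e he => bE.1 (hΦEm e he)
  have hatt2 : ∀ e ∈ h₀.E, g₀.att (ΨE e) = (h₀.att e).map Ψ := by
    intro e he
    show g₀.att (fhe (ΦE e)) = _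
    rw [batt (ΦE e) (hΦEm e he), hΦatt e he, List.map_map]
    rfl
  have hΨinj : ∀ x ∈ h₀.V, ∀ y ∈ h₀.V, Ψ x = Ψ y → x = y := by
    intro x hx y hy hxy
    exact hΦinj hx hy (bV.2.1 (hΦV x hx) (hΦV y hy) hxy)
  have hextV : ∀ x ∈ h₀.ext, x ∈ h₀.V := fun x hx => Gh₀.1.2.2.1 x hx
  -- dewey decoding
  set dew : ℕ → List ℕ :=
    fun x => if hx : ∃ w ∈ t.D, t.pos w = x then hx.choose else [] with hdew
  have hdewspec : ∀ x, ∀ w ∈ t.D, t.pos w = x → (dew x ∈ t.D ∧ t.pos (dew x) = x) := by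
    intro x w hw hwx
    have hx : ∃ w ∈ t.D, t.pos w = x := ⟨w, hw, hwx⟩
    simp only [hdew, hx, dif_pos]
    exact ⟨hx.choose_spec.1, hx.choose_spec.2⟩
  have hdeweq : ∀ x, ∀ w ∈ t.D, t.pos w = x → dew x = w := by
    intro x w hw hwx
    obtain ⟨h1, h2⟩ := hdewspec x w hw hwx
    exact S4.pos_injOn t h1 hw (by rw [h2, hwx])
  -- the packaged consequence of an ls-edge
  have KEY2 : ∀ a b : ℕ, lsRel G A a b →
      a ∈ h₀.ext ∧ b ∈ h₀.ext ∧
      dew (Ψ a) ∈ t.D ∧ dew (Ψ b) ∈ t.D ∧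
      Ψ a = t.pos (dew (Ψ a)) ∧ Ψ b = t.pos (dew (Ψ b)) ∧
      dew (Ψ a) <+: dew (Ψ b) ∧ (dew (Ψ a)).length < (dew (Ψ b)).length ∧
      (∀ w ∈ t.D, dew (Ψ a) <+: w → w.length ≠ (dew (Ψ a)).length →
        w <+: dew (Ψ b) → w.length ≠ (dew (Ψ b)).length →
        ∀ z ∈ h₀.ext, Ψ z ≠ t.pos w) := by
    intro a b hab
    obtain ⟨ha, hb, p, hpath, hint⟩ := KEY a b hab
    have hP : g₀.IsPath (p.map ΨE) (Ψ a) (Ψ b) := S4.path_map hmem2 hatt2 hpath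
    obtain ⟨ws, wt, hwsD, hwtD, hsa, hsb, hpre, hlen, hbet⟩ := S4.tree_path wfT hTG _ _ _ hP
    have hda : dew (Ψ a) = ws := hdeweq _ ws hwsD hsa.symm
    have hdb : dew (Ψ b) = wt := hdeweq _ wt hwtD hsb.symm
    rw [hda, hdb]
    refine ⟨ha, hb, hwsD, hwtD, hsa, hsb, hpre, hlen, ?_⟩
    · intro w hwD h1 h2 h3 h4 z hz hzw
      obtain ⟨e, he, hhead⟩ := hbet w hwD h1 h2 h3 h4
      rw [← List.map_tail] at he
      obtain ⟨x, hx, rfl⟩ := List.mem_map.1 he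
      have hxE : x ∈ h₀.E := hpath.2.1 x (List.mem_of_mem_tail hx)
      rw [hatt2 x hxE, List.head?_map] at hhead
      obtain ⟨z₁, hz₁, hz₁w⟩ := Option.map_eq_some_iff.1 hhead
      have hz₁V : z₁ ∈ h₀.V := (Gh₀.1.2.1 x hxE).1 z₁ (List.mem_of_mem_head? hz₁)
      have hz₁ne : z₁ ∉ h₀.ext := hint x hx z₁ hz₁
      have : Ψ z = Ψ z₁ := by rw [hz₁w, hzw]
      exact hz₁ne (hΨinj z (hextV z hz) z₁ hz₁V this ▸ hz)
  constructor
  · -- acyclicity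
    intro u htg
    have mono : ∀ a b : ℕ, Relation.TransGen (lsRel G A) a b →
        (dew (Ψ a)).length < (dew (Ψ b)).length := by
      intro a b h
      induction h with
      | single hb => exact (KEY2 _ _ hb).2.2.2.2.2.2.2.1
      | tail _ hb ih => exact ih.trans (KEY2 _ _ hb).2.2.2.2.2.2.2.1
    exact absurd (mono u u htg) (lt_irrefl _)
  · -- in-degree at most one
    intro v u w huv hwv
    obtain ⟨hu, hv, hduD, hdvD, hpu, hpv, hpre1, hlen1, hbet1⟩ := KEY2 u v huv
    obtain ⟨hw, _, hdwD, _, hpw, _, hpre2, hlen2, hbet2⟩ := KEY2 w v hwv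
    have hcomp : dew (Ψ u) <+: dew (Ψ w) ∨ dew (Ψ w) <+: dew (Ψ u) :=
      List.prefix_or_prefix_of_prefix hpre1 hpre2
    rcases Nat.lt_trichotomy (dew (Ψ u)).length (dew (Ψ w)).length with hlt | heq | hgt
    · exfalso
      have hpre : dew (Ψ u) <+: dew (Ψ w) := by
        rcases hcomp with hc | hc
        · exact hc
        · exact absurd hc.length_le (by omega)
      exact hbet1 (dew (Ψ w)) hdwD hpre (by omega) hpre2 (by omega) w hw hpw
    · have hde : dew (Ψ u) = dew (Ψ w) := by
        rcases hcomp with hc | hc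
        · exact hc.eq_of_length heq
        · exact (hc.eq_of_length heq.symm).symm
      have : Ψ u = Ψ w := by rw [hpu, hpw, hde]
      exact hΨinj u (hextV u hu) w (hextV w hw) this
    · exfalso
      have hpre : dew (Ψ w) <+: dew (Ψ u) := by
        rcases hcomp with hc | hc
        · exact absurd hc.length_le (by omega)
        · exact hc
      exact hbet2 (dew (Ψ u)) hduD hpre (by omega) hpre1 (by omega) u hu hpu
end

section
/- Let h be a hypergraph over Σ ∪ N containing an edge e, and let g be a hypergraph over Σ with rank(g) = rank(e). Let sk(g) be the skeleton graph of g, regarded as a hypergraph whose node set is the set of external nodes of g (with the same external sequence ext_g) and whose edges are simple rank-2 edges (with some fixed label) — one edge from x to y for each pair of external nodes x, y of g such that y is reachable from x in g. Then for all nodes u, v of h (i.e., u, v ∈ V_h), v is reachable from u in h[e/g] if and only if v is reachable from u in h[e/sk(g)]. -/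
open scoped Classical

/-- The skeleton graph of `g`, regarded as a hypergraph with a fixed label
`ℓ`: its nodes are the external nodes of `g` (with the same external
sequence), and it has one simple (rank-2) edge from `x` to `y` for each pair
of external nodes `x, y` such that `y` is reachable from `x` in `g`. -/
noncomputable def skeleton {L : Type} (g : HGraph L) (ℓ : L) : HGraph L where
  V := g.ext.toFinset
  E := ((g.ext.toFinset ×ˢ g.ext.toFinset).filter fun p => g.Reaches p.1 p.2).image
        fun p => Nat.pair p.1 p.2
  att := fun k => [(Nat.unpair k).1, (Nat.unpair k).2]
  lab := fun _ => ℓ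
  ext := g.ext

namespace HGraph

variable {L : Type}

/-- The single-step relation underlying paths: there is an edge whose first
attachment node is `a` and which has `b` among its non-first attachment
nodes. -/
def Step (g : HGraph L) (a b : ℕ) : Prop :=
  ∃ e ∈ g.E, (g.att e).head? = some a ∧ b ∈ (g.att e).tail

lemma transGen_of_isPath {g : HGraph L} :
    ∀ {p : List ℕ} {s t : ℕ}, g.IsPath p s t → Relation.TransGen g.Step s t := by
  intro p
  induction p with
  | nil => intro s t hp; exact absurd rfl hp.1
  | cons e rest ih =>
    intro s t hp
    obtain ⟨-, hmem, ⟨e₀, he₀, hs⟩, hch, ⟨el, hel, ht⟩⟩ := hp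
    rw [List.head?_cons, Option.some_inj] at he₀
    subst he₀
    cases rest with
    | nil =>
      simp only [List.getLast?_singleton, Option.some_inj] at hel
      subst hel
      exact Relation.TransGen.single ⟨e, hmem e (by simp), hs, ht⟩
    | cons e' rest' =>
      obtain ⟨hlink, hch'⟩ := List.isChain_cons_cons.mp hch
      obtain ⟨w, hw1, hw2⟩ := hlink
      have hstep : g.Step s w := ⟨e, hmem e (by simp), hs, hw2⟩
      have hpath' : g.IsPath (e' :: rest') w t := by
        refine ⟨by simp, fun e'' he'' => hmem e'' (by simp [he'']), ⟨e', by simp, hw1⟩,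
          hch', ⟨el, ?_, ht⟩⟩
        rwa [List.getLast?_cons_cons] at hel
      exact Relation.TransGen.head hstep (ih hpath')

lemma exists_isPath_of_transGen {g : HGraph L} {s t : ℕ}
    (h : Relation.TransGen g.Step s t) : ∃ p, g.IsPath p s t := by
  induction h with
  | single hst =>
    obtain ⟨e, heE, h1, h2⟩ := hst
    exact ⟨[e], by simp, fun e' he' => by rw [List.eq_of_mem_singleton he']; exact heE, ⟨e, rfl, h1⟩,
      List.isChain_singleton e, ⟨e, rfl, h2⟩⟩
  | tail hab hbc ih =>
    obtain ⟨p, hp0, hpmem, ⟨ef, hef, hefs⟩, hch, ⟨el, hel, hb⟩⟩ := ih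
    obtain ⟨e, heE, h1, h2⟩ := hbc
    refine ⟨p ++ [e], by simp, ?_, ⟨ef, ?_, hefs⟩, ?_, ⟨e, List.getLast?_concat (l := p), h2⟩⟩
    · intro e' he'
      rcases List.mem_append.mp he' with h' | h'
      · exact hpmem e' h'
      · rw [List.eq_of_mem_singleton h']; exact heE
    · rw [List.head?_append, hef]; rfl
    · apply List.isChain_append.mpr
      refine ⟨hch, List.isChain_singleton e, ?_⟩
      intro x hx y hy
      rw [hel, Option.mem_def, Option.some_inj] at hx
      rw [List.head?_cons, Option.mem_def, Option.some_inj] at hy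
      subst hx; subst hy
      exact ⟨_, h1, hb⟩

lemma reaches_iff_reflTransGen (g : HGraph L) (s t : ℕ) :
    g.Reaches s t ↔ Relation.ReflTransGen g.Step s t := by
  constructor
  · rintro (rfl | ⟨p, hp⟩)
    · exact Relation.ReflTransGen.refl
    · exact (transGen_of_isPath hp).to_reflTransGen
  · intro hr
    rcases Relation.reflTransGen_iff_eq_or_transGen.mp hr with rfl | htg
    · exact Or.inl rfl
    · exact Or.inr (exists_isPath_of_transGen htg)

end HGraph

/-- Replacing an edge `e` of `h` by a graph `g` or by the
skeleton graph of `g` yields the same reachability relation on the nodes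
of `h`. -/
theorem skeleton_replacement_preserves_reachability {L : Type} (rk : L → ℕ)
    (h g : HGraph L) (hWFh : h.WF rk) (hWFg : g.WF rk)
    (e : ℕ) (he : e ∈ h.E) (hrk : (h.att e).length = g.ext.length) (ℓ : L)
    (h₁ h₂ : HGraph L)
    (hrep₁ : IsReplacement h e g h₁)
    (hrep₂ : IsReplacement h e (skeleton g ℓ) h₂)
    (u v : ℕ) (hu : u ∈ h.V) (hv : v ∈ h.V) :
    h₁.Reaches u v ↔ h₂.Reaches u v := by
  classical
  obtain ⟨ρ₁, η₁, hρ₁inj, hη₁inj, hρ₁int, hρ₁ext, hη₁new, hV₁, hE₁, hold₁, hnew₁, hext₁⟩ :=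
    hrep₁
  obtain ⟨ρ₂, η₂, hρ₂inj, hη₂inj, hρ₂int, hρ₂ext, hη₂new, hV₂, hE₂, hold₂, hnew₂, hext₂⟩ :=
    hrep₂
  -- ρ₁ and ρ₂ agree on the external nodes of g
  have hagree : ∀ x ∈ g.ext, ρ₁ x = ρ₂ x := by
    have : g.ext.map ρ₁ = g.ext.map ρ₂ := by
      rw [hρ₁ext]
      have : (skeleton g ℓ).ext = g.ext := rfl
      rw [← this, hρ₂ext]
    exact List.map_eq_map_iff.mp this
  have hattV : ∀ w ∈ h.att e, w ∈ h.V := ((hWFh.2.1 e he).1)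
  have hextV : ∀ x ∈ g.ext, x ∈ g.V := hWFg.2.2.1
  -- membership of skeleton-copy edges in h₂
  have hskelE : ∀ x ∈ g.ext, ∀ y ∈ g.ext, g.Reaches x y →
      Nat.pair x y ∈ (skeleton g ℓ).E := by
    intro x hx y hy hxy
    simp only [skeleton, Finset.mem_image, Finset.mem_filter, Finset.mem_product,
      List.mem_toFinset]
    exact ⟨(x, y), ⟨⟨hx, hy⟩, hxy⟩, rfl⟩
  have hskelStep : ∀ x ∈ g.ext, ∀ y ∈ g.ext, g.Reaches x y →
      h₂.Step (ρ₂ x) (ρ₂ y) := by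
    intro x hx y hy hxy
    have hk := hskelE x hx y hy hxy
    refine ⟨η₂ (Nat.pair x y), ?_, ?_, ?_⟩
    · rw [hE₂]; exact Finset.mem_union_right _ (Finset.mem_image_of_mem _ hk)
    · rw [(hnew₂ _ hk).1]
      simp [skeleton, Nat.unpair_pair]
    · rw [(hnew₂ _ hk).1]
      simp [skeleton, Nat.unpair_pair]
  -- old edges give the same steps in h₁ and h₂
  have hold_step₁ : ∀ e' ∈ h.E.erase e, ∀ a b : ℕ,
      (h.att e').head? = some a → b ∈ (h.att e').tail → h₁.Step a b := by
    intro e' he' a b h1 h2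
    exact ⟨e', by rw [hE₁]; exact Finset.mem_union_left _ he',
      by rw [(hold₁ e' he').1]; exact h1, by rw [(hold₁ e' he').1]; exact h2⟩
  have hold_step₂ : ∀ e' ∈ h.E.erase e, ∀ a b : ℕ,
      (h.att e').head? = some a → b ∈ (h.att e').tail → h₂.Step a b := by
    intro e' he' a b h1 h2
    exact ⟨e', by rw [hE₂]; exact Finset.mem_union_left _ he',
      by rw [(hold₂ e' he').1]; exact h1, by rw [(hold₂ e' he').1]; exact h2⟩
  -- steps in g map to steps in h₁ via ρ₁
  have hg_step₁ : ∀ a b : ℕ, g.Step a b → h₁.Step (ρ₁ a) (ρ₁ b) := by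
    rintro a b ⟨f, hf, h1, h2⟩
    refine ⟨η₁ f, ?_, ?_, ?_⟩
    · rw [hE₁]; exact Finset.mem_union_right _ (Finset.mem_image_of_mem _ hf)
    · rw [(hnew₁ f hf).1, List.head?_map, h1]; rfl
    · rw [(hnew₁ f hf).1, ← List.map_tail]; exact List.mem_map_of_mem (f := ρ₁) h2
  have hg_rtg₁ : ∀ a b : ℕ, Relation.ReflTransGen g.Step a b →
      Relation.ReflTransGen h₁.Step (ρ₁ a) (ρ₁ b) := by
    intro a b hab
    induction hab with
    | refl => exact Relation.ReflTransGen.refl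
    | tail _ hbc ih => exact ih.tail (hg_step₁ _ _ hbc)
  rw [h₁.reaches_iff_reflTransGen, h₂.reaches_iff_reflTransGen]
  constructor
  · -- h₁ → h₂
    intro hr
    -- invariant for head induction
    suffices H : (u ∈ h.V → Relation.ReflTransGen h₂.Step u v) ∧
        (∀ z ∈ g.V, u = ρ₁ z → ∀ x ∈ g.ext, Relation.ReflTransGen g.Step x z →
          Relation.ReflTransGen h₂.Step (ρ₁ x) v) from H.1 hu
    clear hu
    induction hr using Relation.ReflTransGen.head_induction_on with
    | refl =>
      refine ⟨fun _ => Relation.ReflTransGen.refl, ?_⟩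
      intro z hz hvz x hx hxz
      have hzext : z ∈ g.ext := by
        by_contra hzint
        exact hρ₁int z hz hzint (hvz ▸ hv)
      have hstep : h₂.Step (ρ₂ x) v := by
        have := hskelStep x hx z hzext ((g.reaches_iff_reflTransGen x z).mpr hxz)
        rwa [← hagree z hzext, ← hvz] at this
      rw [hagree x hx]
      exact Relation.ReflTransGen.head hstep Relation.ReflTransGen.refl
    | @head a c hstep _hrt ih =>
      obtain ⟨e', he'E, h1, h2⟩ := hstep
      rw [hE₁] at he'E
      rcases Finset.mem_union.mp he'E with hcase | hcase
      · -- an old edge of h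
        have hatt : h₁.att e' = h.att e' := (hold₁ e' hcase).1
        rw [hatt] at h1 h2
        have he'h : e' ∈ h.E := Finset.mem_of_mem_erase hcase
        have haV : a ∈ h.V := (hWFh.2.1 e' he'h).1 a (by
          rcases h : h.att e' with _ | ⟨a', l⟩
          · rw [h] at h1; simp at h1
          · rw [h] at h1; simp at h1; simp [h, h1])
        have hcV : c ∈ h.V := (hWFh.2.1 e' he'h).1 c (List.mem_of_mem_tail h2)
        have hstep₂ : h₂.Step a c := hold_step₂ e' hcase a c h1 h2
        have part1 : a ∈ h.V → Relation.ReflTransGen h₂.Step a v :=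
          fun _ => Relation.ReflTransGen.head hstep₂ (ih.1 hcV)
        refine ⟨part1, ?_⟩
        intro z hz haz x hx hxz
        have hzext : z ∈ g.ext := by
          by_contra hzint
          exact hρ₁int z hz hzint (haz ▸ haV)
        have hs : h₂.Step (ρ₂ x) a := by
          have := hskelStep x hx z hzext ((g.reaches_iff_reflTransGen x z).mpr hxz)
          rwa [← hagree z hzext, ← haz] at this
        rw [hagree x hx]
        exact Relation.ReflTransGen.head hs (part1 haV)
      · -- a copy edge of g
        obtain ⟨f, hf, rfl⟩ := Finset.mem_image.mp hcase
        have hatt : h₁.att (η₁ f) = (g.att f).map ρ₁ := (hnew₁ f hf).1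
        rw [hatt, List.head?_map] at h1
        rw [hatt, ← List.map_tail] at h2
        obtain ⟨x₀, hx₀, hx₀a⟩ := Option.map_eq_some_iff.mp h1
        obtain ⟨w, hw, hwc⟩ := List.mem_map.mp h2
        have hx₀V : x₀ ∈ g.V := (hWFg.2.1 f hf).1 x₀ (List.mem_of_mem_head? hx₀)
        have hwV : w ∈ g.V := (hWFg.2.1 f hf).1 w (List.mem_of_mem_tail hw)
        have hgstep : g.Step x₀ w := ⟨f, hf, hx₀, hw⟩
        have part2 : ∀ z ∈ g.V, a = ρ₁ z → ∀ x ∈ g.ext,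
            Relation.ReflTransGen g.Step x z →
            Relation.ReflTransGen h₂.Step (ρ₁ x) v := by
          intro z hz haz x hx hxz
          have hzx₀ : z = x₀ := hρ₁inj hz hx₀V (haz ▸ hx₀a).symm
          subst hzx₀
          exact ih.2 w hwV hwc.symm x hx (hxz.tail hgstep)
        refine ⟨?_, part2⟩
        intro haV
        have hx₀ext : x₀ ∈ g.ext := by
          by_contra hint
          exact hρ₁int x₀ hx₀V hint (hx₀a ▸ haV)
        have := part2 x₀ hx₀V hx₀a.symm x₀ hx₀ext Relation.ReflTransGen.refl
        rwa [hx₀a] at this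
  · -- h₂ → h₁
    intro hr
    clear hv hu
    have key : ∀ a b : ℕ, h₂.Step a b → Relation.ReflTransGen h₁.Step a b := by
      rintro a b ⟨e', he'E, h1, h2⟩
      rw [hE₂] at he'E
      rcases Finset.mem_union.mp he'E with hcase | hcase
      · rw [(hold₂ e' hcase).1] at h1 h2
        exact Relation.ReflTransGen.single (hold_step₁ e' hcase a b h1 h2)
      · obtain ⟨k, hk, rfl⟩ := Finset.mem_image.mp hcase
        have hkform := hk
        simp only [skeleton, Finset.mem_image, Finset.mem_filter, Finset.mem_product,
          List.mem_toFinset] at hkform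
        obtain ⟨⟨x, y⟩, ⟨⟨hx, hy⟩, hxy⟩, rfl⟩ := hkform
        have hatt : h₂.att (η₂ (Nat.pair x y)) = [ρ₂ x, ρ₂ y] := by
          rw [(hnew₂ _ hk).1]
          simp [skeleton, Nat.unpair_pair]
        rw [hatt] at h1 h2
        simp only [List.head?_cons, Option.some_inj] at h1
        simp only [List.tail_cons, List.mem_singleton] at h2
        subst h1; subst h2
        have := hg_rtg₁ x y ((g.reaches_iff_reflTransGen x y).mp hxy)
        rwa [hagree x hx, hagree y hy] at this
    induction hr with
    | refl => exact Relation.ReflTransGen.refl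
    | tail _ hbc ih => exact ih.trans (key _ _ hbc)
end

section
/- Let G = (N, P, S) be an SL-HR grammar, and for each nonterminal A let sk(A) be the skeleton graph of val(A), regarded as a hypergraph on rank(A) external nodes with simple rank-2 edges. Let S' be the graph obtained from the start graph S by replacing every nonterminal edge e by sk(lab(e)) (identifying the external nodes of sk(lab(e)) with the attachment nodes of e in order). Then for all nodes u, v of S: v is reachable from u in val(G) if and only if v is reachable from u in S'. (This equivalence is the correctness statement underlying the result that reachability between two given nodes of val(G) can be decided in time linear in |G|.) -/
open scoped Classical

namespace HRGrammar

variable {T : Type}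

/-- The handle of a nonterminal `A`: `rank(A)` external nodes and a single
`A`-labeled edge attached to all of them in order. -/
def handle (G : HRGrammar T) (A : ℕ) : HGraph (T ⊕ ℕ) where
  V := Finset.range (G.rkN A)
  E := {0}
  att := fun _ => List.range (G.rkN A)
  lab := fun _ => Sum.inr A
  ext := List.range (G.rkN A)

/-- The skeleton relation of `val(A)` on positions of external nodes:
`skRel G A i j` iff the `j`-th external node is reachable from the `i`-th
external node in `val(A)` (the terminal graph derived from `handle(A)`;
its external nodes are `0, …, rank(A) - 1`). -/
def skRel (G : HRGrammar T) (A : ℕ) (i j : ℕ) : Prop :=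
  i < G.rkN A ∧ j < G.rkN A ∧
    ∃ h : HGraph (T ⊕ ℕ),
      Relation.ReflTransGen G.Derive (G.handle A) h ∧ Terminal h ∧ h.Reaches i j

/-- The graph `S'` obtained from the start graph `S` by replacing every
nonterminal edge `e` (labeled `A`) by the skeleton graph `sk(A)`, identifying
the external nodes of `sk(A)` with the attachment nodes of `e` in order.
Terminal edges `e` of `S` keep their data (stored at id `2·e`); the skeleton
edge for a nonterminal edge `e` and positions `i, j` with `skRel G A i j` is a
simple `ℓ`-labeled edge between the `i`-th and `j`-th attachment node of `e`
(stored at id `2·⟨e,⟨i,j⟩⟩ + 1`). -/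
noncomputable def startSk (G : HRGrammar T) (ℓ : T ⊕ ℕ) : HGraph (T ⊕ ℕ) where
  V := G.S.V
  E :=
    ((G.S.E.filter fun e => ∀ A ∈ G.NT, G.S.lab e ≠ Sum.inr A).image fun e => 2 * e) ∪
    (((G.S.E ×ˢ (Finset.range (G.S.E.sup fun e => (G.S.att e).length) ×ˢ
          Finset.range (G.S.E.sup fun e => (G.S.att e).length))).filter
        fun p => ∃ A ∈ G.NT, G.S.lab p.1 = Sum.inr A ∧ skRel G A p.2.1 p.2.2).image
      fun p => 2 * Nat.pair p.1 (Nat.pair p.2.1 p.2.2) + 1)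
  att := fun k =>
    if k % 2 = 0 then G.S.att (k / 2)
    else
      [(G.S.att (Nat.unpair ((k - 1) / 2)).1).getD
          (Nat.unpair (Nat.unpair ((k - 1) / 2)).2).1 0,
       (G.S.att (Nat.unpair ((k - 1) / 2)).1).getD
          (Nat.unpair (Nat.unpair ((k - 1) / 2)).2).2 0]
  lab := fun k => if k % 2 = 0 then G.S.lab (k / 2) else ℓ
  ext := G.S.ext

end HRGrammar

namespace HGraph

variable {L : Type}

/-- One-edge step relation. -/
def step (g : HGraph L) (x y : ℕ) : Prop :=
  ∃ e ∈ g.E, (g.att e).head? = some x ∧ y ∈ (g.att e).tail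

lemma isPath_singleton {g : HGraph L} {e s t : ℕ}
    (he : e ∈ g.E) (hs : (g.att e).head? = some s) (ht : t ∈ (g.att e).tail) :
    g.IsPath [e] s t := by
  refine ⟨by simp, by simpa using he, ⟨e, rfl, hs⟩, List.isChain_singleton _, ⟨e, rfl, ht⟩⟩

lemma IsPath.append {g : HGraph L} {p q : List ℕ} {s m t : ℕ}
    (hp : g.IsPath p s m) (hq : g.IsPath q m t) : g.IsPath (p ++ q) s t := by
  obtain ⟨hpne, hpE, ⟨e₁, he₁, hs⟩, hpc, ⟨e₂, he₂, hm⟩⟩ := hp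
  obtain ⟨hqne, hqE, ⟨f₁, hf₁, hmh⟩, hqc, ⟨f₂, hf₂, ht⟩⟩ := hq
  refine ⟨by simp [hpne], ?_, ⟨e₁, ?_, hs⟩, ?_, ⟨f₂, ?_, ht⟩⟩
  · intro e he; rcases List.mem_append.mp he with h | h
    · exact hpE e h
    · exact hqE e h
  · rw [List.head?_append] ; simp [he₁]
  · refine List.IsChain.append hpc hqc ?_
    intro a ha b hb
    have ha' : a = e₂ := by rw [Option.mem_def, he₂] at ha; exact (Option.some_inj.mp ha.symm)
    have hb' : b = f₁ := by rw [Option.mem_def, hf₁] at hb; exact (Option.some_inj.mp hb.symm)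
    subst ha' hb'
    exact ⟨m, hmh, hm⟩
  · rw [List.getLast?_append_of_ne_nil _ hqne]; exact hf₂

end HGraph
namespace HGraph

variable {L : Type}

lemma isPath_cons {g : HGraph L} {e e' : ℕ} {rest : List ℕ} {s t : ℕ}
    (h : g.IsPath (e :: e' :: rest) s t) :
    ∃ v, g.step s v ∧ g.IsPath (e' :: rest) v t := by
  obtain ⟨-, hE, ⟨e₁, he₁, hs⟩, hc, ⟨e₂, he₂, ht⟩⟩ := h
  have he₁' : e₁ = e := by simpa using he₁.symm
  rw [he₁'] at hs
  rcases List.isChain_cons_cons.mp hc with ⟨⟨v, hv1, hv2⟩, hc'⟩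
  refine ⟨v, ⟨e, hE e (by simp), hs, hv2⟩, ?_⟩
  refine ⟨by simp, fun f hf => hE f (List.mem_cons_of_mem _ hf), ⟨e', rfl, hv1⟩, hc', ⟨e₂, ?_, ht⟩⟩
  rw [List.getLast?_cons_cons] at he₂
  exact he₂

lemma reaches_iff_rtg {g : HGraph L} {s t : ℕ} :
    g.Reaches s t ↔ Relation.ReflTransGen g.step s t := by
  constructor
  · rintro (rfl | ⟨p, hp⟩)
    · exact .refl
    · induction p generalizing s with
      | nil => exact absurd rfl hp.1
      | cons e rest ih =>
        cases rest with
        | nil =>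
          obtain ⟨-, hE, ⟨e₁, he₁, hs⟩, -, ⟨e₂, he₂, ht⟩⟩ := hp
          have h1 : e₁ = e := by simpa using he₁.symm
          have h2 : e₂ = e := by simpa using he₂.symm
          rw [h1] at hs; rw [h2] at ht
          exact Relation.ReflTransGen.single ⟨e, hE e (by simp), hs, ht⟩
        | cons e' rest' =>
          obtain ⟨v, hst, hp'⟩ := isPath_cons hp
          exact Relation.ReflTransGen.head hst (ih hp')
  · intro h
    induction h with
    | refl => exact Or.inl rfl
    | tail _ hbc ih =>
      rename_i b c _
      obtain ⟨e, he, hb, hc⟩ := hbc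
      rcases ih with rfl | ⟨p, hp⟩
      · exact Or.inr ⟨[e], isPath_singleton he hb hc⟩
      · exact Or.inr ⟨p ++ [e], hp.append (isPath_singleton he hb hc)⟩

end HGraph
namespace HRGrammar

variable {T : Type}

/-- Modified step relation: terminal edges step as usual; a nonterminal edge
labeled `A` contributes a step from its `i`-th to its `j`-th attachment node
whenever `skRel G A i j`. -/
def mstep (G : HRGrammar T) (g : HGraph (T ⊕ ℕ)) (x y : ℕ) : Prop :=
  ∃ e ∈ g.E,
    ((∃ a : T, g.lab e = Sum.inl a) ∧ (g.att e).head? = some x ∧ y ∈ (g.att e).tail) ∨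
    (∃ A ∈ G.NT, g.lab e = Sum.inr A ∧ ∃ i j : ℕ,
      i < (g.att e).length ∧ j < (g.att e).length ∧ G.skRel A i j ∧
      (g.att e).getD i 0 = x ∧ (g.att e).getD j 0 = y)

/-- Reachability with respect to `mstep`. -/
def Mreach (G : HRGrammar T) (g : HGraph (T ⊕ ℕ)) (x y : ℕ) : Prop :=
  Relation.ReflTransGen (G.mstep g) x y

/-- The well-formedness invariant maintained along derivations. -/
def GWF (G : HRGrammar T) (rkT : T → ℕ) (g : HGraph (T ⊕ ℕ)) : Prop :=
  ∀ e ∈ g.E, (∀ v ∈ g.att e, v ∈ g.V) ∧ (g.att e).Nodup ∧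
    (g.att e).length = G.rk rkT (g.lab e) ∧ g.att e ≠ [] ∧
    (∀ B : ℕ, g.lab e = Sum.inr B → B ∈ G.NT)

/-- The skeleton relation of `A` agrees with `mstep`-reachability between
external nodes of `rhs A`. -/
def SkOK (G : HRGrammar T) (A : ℕ) : Prop :=
  ∀ i j : ℕ, G.skRel A i j ↔ (i < G.rkN A ∧ j < G.rkN A ∧
    G.Mreach (G.rhs A) ((G.rhs A).ext.getD i 0) ((G.rhs A).ext.getD j 0))

/-- All nonterminal labels of `g`, and their dependency-descendants, satisfy
`SkOK`. -/
def DescOK (G : HRGrammar T) (g : HGraph (T ⊕ ℕ)) : Prop :=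
  ∀ e ∈ g.E, ∀ B : ℕ, g.lab e = Sum.inr B →
    ∀ C : ℕ, Relation.ReflTransGen G.dep B C → G.SkOK C

lemma mstep_of_terminal {G : HRGrammar T} {g : HGraph (T ⊕ ℕ)}
    (hg : Terminal g) {x y : ℕ} : G.mstep g x y ↔ g.step x y := by
  constructor
  · rintro ⟨e, he, ⟨-, hx, hy⟩ | ⟨A, -, hA, -⟩⟩
    · exact ⟨e, he, hx, hy⟩
    · obtain ⟨a, ha⟩ := hg e he
      rw [ha] at hA; exact absurd hA (by simp)
  · rintro ⟨e, he, hx, hy⟩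
    exact ⟨e, he, Or.inl ⟨hg e he, hx, hy⟩⟩

lemma mreach_of_terminal {G : HRGrammar T} {g : HGraph (T ⊕ ℕ)}
    (hg : Terminal g) {x y : ℕ} : G.Mreach g x y ↔ g.Reaches x y := by
  rw [HGraph.reaches_iff_rtg]
  constructor <;> intro h <;> induction h with
  | refl => exact .refl
  | tail _ hbc ih => exact .tail ih (by first
      | exact (mstep_of_terminal hg).mp hbc
      | exact (mstep_of_terminal hg).mpr hbc)

lemma mstep_mem_V {G : HRGrammar T} {g : HGraph (T ⊕ ℕ)}
    (hg : ∀ e ∈ g.E, ∀ v ∈ g.att e, v ∈ g.V) {x y : ℕ}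
    (h : G.mstep g x y) : x ∈ g.V ∧ y ∈ g.V := by
  obtain ⟨e, he, ⟨-, hx, hy⟩ | ⟨A, -, -, i, j, hi, hj, -, hx, hy⟩⟩ := h
  · exact ⟨hg e he x (List.mem_of_mem_head? hx),
      hg e he y (List.mem_of_mem_tail hy)⟩
  · subst hx hy
    have h1 : (g.att e).getD i 0 ∈ g.att e := by
      rw [List.getD_eq_getElem _ _ hi]; exact List.getElem_mem hi
    have h2 : (g.att e).getD j 0 ∈ g.att e := by
      rw [List.getD_eq_getElem _ _ hj]; exact List.getElem_mem hj
    exact ⟨hg e he _ h1, hg e he _ h2⟩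

end HRGrammar
namespace HRGrammar

variable {T : Type}

/-- Height of a nonterminal: the number of its strict dependency
descendants. -/
noncomputable def ht (G : HRGrammar T) (A : ℕ) : ℕ :=
  (G.NT.filter fun B => Relation.TransGen G.dep A B).card

lemma ht_lt_of_dep {G : HRGrammar T} (hSL : G.SL) {A B : ℕ}
    (h : G.dep A B) : G.ht B < G.ht A := by
  apply Finset.card_lt_card
  constructor
  · intro C hC
    rw [Finset.mem_filter] at *
    exact ⟨hC.1, (Relation.TransGen.single h).trans hC.2⟩
  · intro hsub
    have hB : B ∈ G.NT.filter fun C => Relation.TransGen G.dep A C :=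
      Finset.mem_filter.mpr ⟨h.2.1, Relation.TransGen.single h⟩
    have := Finset.mem_filter.mp (hsub hB)
    exact hSL.1 B this.2

lemma ht_lt_of_transGen {G : HRGrammar T} (hSL : G.SL) {A B : ℕ}
    (h : Relation.TransGen G.dep A B) : G.ht B < G.ht A := by
  induction h with
  | single h => exact ht_lt_of_dep hSL h
  | tail _ h ih => exact lt_trans (ht_lt_of_dep hSL h) ih

/-- Weight of a label, used as a termination measure. -/
noncomputable def wt (G : HRGrammar T) (l : T ⊕ ℕ) : ℕ :=
  match l with
  | Sum.inl _ => 0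
  | Sum.inr B => ((G.NT.sup fun A => (G.rhs A).E.card) + 1) ^ (G.ht B + 1)

/-- Termination measure of a sentential form. -/
noncomputable def meas (G : HRGrammar T) (g : HGraph (T ⊕ ℕ)) : ℕ :=
  ∑ e ∈ g.E, G.wt (g.lab e)

lemma nt_closed {G : HRGrammar T} {B C : ℕ}
    (h : Relation.ReflTransGen G.dep B C) (hB : B ∈ G.NT) : C ∈ G.NT := by
  induction h with
  | refl => exact hB
  | tail _ h _ => exact h.2.1

end HRGrammar
namespace HRGrammar

variable {T : Type}

lemma rtg_mono_of_reach {α : Type*} {r s : α → α → Prop}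
    (h : ∀ a b, r a b → Relation.ReflTransGen s a b) {x y : α}
    (hr : Relation.ReflTransGen r x y) : Relation.ReflTransGen s x y := by
  induction hr with
  | refl => exact .refl
  | tail _ hbc ih => exact ih.trans (h _ _ hbc)

lemma getD_map {ρ : ℕ → ℕ} {l : List ℕ} {i : ℕ} (hi : i < l.length) :
    (l.map ρ).getD i 0 = ρ (l.getD i 0) := by
  rw [List.getD_eq_getElem _ _ (by simpa using hi), List.getD_eq_getElem _ _ hi,
    List.getElem_map]

lemma getD_mem {l : List ℕ} {i : ℕ} (hi : i < l.length) : l.getD i 0 ∈ l := by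
  rw [List.getD_eq_getElem _ _ hi]; exact List.getElem_mem hi

/-- Lifting an `mstep` of a copied graph into the replacement result. -/
lemma mstep_copy_lift {G : HRGrammar T} {h g' : HGraph (T ⊕ ℕ)}
    {ρ η : ℕ → ℕ}
    (hE' : ∀ f ∈ h.E, η f ∈ g'.E)
    (hcp : ∀ f ∈ h.E, g'.att (η f) = (h.att f).map ρ ∧ g'.lab (η f) = h.lab f)
    {a b : ℕ} (hs : G.mstep h a b) : G.mstep g' (ρ a) (ρ b) := by
  obtain ⟨f, hf, hcase⟩ := hs
  obtain ⟨hatt, hlab⟩ := hcp f hf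
  refine ⟨η f, hE' f hf, ?_⟩
  rcases hcase with ⟨⟨t0, ht0⟩, hx, hy⟩ | ⟨A, hANT, hA, i, j, hi, hj, hsk, hx, hy⟩
  · refine Or.inl ⟨⟨t0, by rw [hlab]; exact ht0⟩, ?_, ?_⟩
    · rw [hatt, List.head?_map, hx]; rfl
    · rw [hatt, ← List.map_tail]; exact List.mem_map_of_mem hy
  · refine Or.inr ⟨A, hANT, by rw [hlab]; exact hA, i, j, ?_, ?_, hsk, ?_, ?_⟩
    · rw [hatt]; simpa using hi
    · rw [hatt]; simpa using hj
    · rw [hatt, getD_map hi, hx]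
    · rw [hatt, getD_map hj, hy]

/-- Classification of `mstep`s in a replacement result. -/
lemma mstep_replace_cases {G : HRGrammar T} {g h g' : HGraph (T ⊕ ℕ)}
    {e₀ : ℕ} {ρ η : ℕ → ℕ}
    (hEeq : g'.E = g.E.erase e₀ ∪ h.E.image η)
    (hold : ∀ e ∈ g.E.erase e₀, g'.att e = g.att e ∧ g'.lab e = g.lab e)
    (hcp : ∀ f ∈ h.E, g'.att (η f) = (h.att f).map ρ ∧ g'.lab (η f) = h.lab f)
    (hgV : ∀ e ∈ g.E, ∀ v ∈ g.att e, v ∈ g.V)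
    (hhV : ∀ f ∈ h.E, ∀ v ∈ h.att f, v ∈ h.V)
    {x z : ℕ} (hs : G.mstep g' x z) :
    (x ∈ g.V ∧ z ∈ g.V ∧ G.mstep g x z) ∨
      (∃ a ∈ h.V, ∃ b ∈ h.V, x = ρ a ∧ z = ρ b ∧ G.mstep h a b) := by
  obtain ⟨f, hf, hcase⟩ := hs
  rw [hEeq] at hf
  rcases Finset.mem_union.mp hf with hf | hf
  · left
    obtain ⟨hatt, hlab⟩ := hold f hf
    rw [hatt, hlab] at hcase
    have hm : G.mstep g x z := ⟨f, Finset.mem_of_mem_erase hf, hcase⟩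
    exact ⟨(mstep_mem_V hgV hm).1, (mstep_mem_V hgV hm).2, hm⟩
  · right
    obtain ⟨f₀, hf₀, rfl⟩ := Finset.mem_image.mp hf
    obtain ⟨hatt, hlab⟩ := hcp f₀ hf₀
    rw [hatt, hlab] at hcase
    rcases hcase with ⟨⟨t0, ht0⟩, hx, hy⟩ | ⟨A, hANT, hA, i, j, hi, hj, hsk, hx, hy⟩
    · rw [List.head?_map] at hx
      obtain ⟨a, ha, rfl⟩ := Option.map_eq_some_iff.mp hx
      rw [← List.map_tail] at hy
      obtain ⟨b, hb, rfl⟩ := List.mem_map.mp hy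
      exact ⟨a, hhV f₀ hf₀ a (List.mem_of_mem_head? ha), b,
        hhV f₀ hf₀ b (List.mem_of_mem_tail hb), rfl, rfl,
        f₀, hf₀, Or.inl ⟨⟨t0, ht0⟩, ha, hb⟩⟩
    · rw [List.length_map] at hi hj
      rw [getD_map hi] at hx
      rw [getD_map hj] at hy
      exact ⟨_, hhV f₀ hf₀ _ (getD_mem hi), _, hhV f₀ hf₀ _ (getD_mem hj),
        hx.symm, hy.symm, f₀, hf₀, Or.inr ⟨A, hANT, hA, i, j, hi, hj, hsk, rfl, rfl⟩⟩

end HRGrammar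
namespace HRGrammar

variable {T : Type}

lemma mreach_copy_lift {G : HRGrammar T} {h g' : HGraph (T ⊕ ℕ)}
    {ρ η : ℕ → ℕ}
    (hE' : ∀ f ∈ h.E, η f ∈ g'.E)
    (hcp : ∀ f ∈ h.E, g'.att (η f) = (h.att f).map ρ ∧ g'.lab (η f) = h.lab f)
    {a b : ℕ} (hs : G.Mreach h a b) : G.Mreach g' (ρ a) (ρ b) := by
  induction hs with
  | refl => exact Relation.ReflTransGen.refl
  | tail _ hbc ih => exact ih.tail (mstep_copy_lift hE' hcp hbc)

lemma mem_ext_getD {h : HGraph (T ⊕ ℕ)} {a : ℕ} (ha : a ∈ h.ext) :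
    ∃ k, k < h.ext.length ∧ h.ext.getD k 0 = a := by
  obtain ⟨k, hk, rfl⟩ := List.mem_iff_getElem.mp ha
  exact ⟨k, hk, List.getD_eq_getElem _ _ hk⟩

/-- The key single-replacement invariance of `mstep`-reachability. -/
lemma mreach_replace {G : HRGrammar T} {rkT : T → ℕ} (hWF : G.WF rkT)
    {g g' : HGraph (T ⊕ ℕ)} {e₀ A : ℕ} (hA : A ∈ G.NT) (hSk : G.SkOK A)
    (hg : G.GWF rkT g) (he₀ : e₀ ∈ g.E) (hlab : g.lab e₀ = Sum.inr A)
    (hr : IsReplacement g e₀ (G.rhs A) g') :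
    ∀ x ∈ g.V, ∀ y ∈ g.V, (G.Mreach g x y ↔ G.Mreach g' x y) := by
  classical
  obtain ⟨ρ, η, hinj, hinjE, hfresh, hmap, hnewE, hV', hE', hold, hcp, hext⟩ := hr
  set h := G.rhs A with hh
  have hrhsWF : h.WF (G.rk rkT) := (hWF.2.2.2.1 A hA).1
  have hextlen : h.ext.length = G.rkN A := (hWF.2.2.2.1 A hA).2
  have hlen₀ : (g.att e₀).length = G.rkN A := by
    have := (hg e₀ he₀).2.2.1
    rw [hlab] at this
    simpa [HRGrammar.rk] using this
  have hgetD : ∀ k < G.rkN A, (g.att e₀).getD k 0 = ρ (h.ext.getD k 0) := by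
    intro k hk
    rw [← hmap, getD_map (by rw [hextlen]; exact hk)]
  have hhV : ∀ f ∈ h.E, ∀ v ∈ h.att f, v ∈ h.V := fun f hf => (hrhsWF.2.1 f hf).1
  have hgV : ∀ e ∈ g.E, ∀ v ∈ g.att e, v ∈ g.V := fun e he => (hg e he).1
  have hE'mem : ∀ f ∈ h.E, η f ∈ g'.E := by
    intro f hf; rw [hE']
    exact Finset.mem_union_right _ (Finset.mem_image_of_mem η hf)
  -- membership in ext for copied nodes that are old nodes
  have hextmem : ∀ a ∈ h.V, ρ a ∈ g.V → ∃ k, k < G.rkN A ∧ h.ext.getD k 0 = a := by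
    intro a ha hρa
    by_cases hae : a ∈ h.ext
    · obtain ⟨k, hk, hk'⟩ := mem_ext_getD hae
      exact ⟨k, hextlen ▸ hk, hk'⟩
    · exact absurd hρa (hfresh a ha hae)
  intro x hx y hy
  constructor
  · -- forward direction
    intro hxy
    refine rtg_mono_of_reach (fun a b hab => ?_) hxy
    obtain ⟨e, he, hcase⟩ := hab
    by_cases hee : e = e₀
    · subst hee
      rcases hcase with ⟨⟨t0, ht0⟩, -, -⟩ | ⟨A', hA'NT, hA', i, j, hi, hj, hsk, hxa, hyb⟩
      · rw [hlab] at ht0; exact absurd ht0 (by simp)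
      · have hAA : A' = A := by rw [hlab] at hA'; exact (Sum.inr_injective hA').symm
        subst hAA
        obtain ⟨hi', hj', hm⟩ := (hSk i j).mp hsk
        have hxa' : a = ρ (h.ext.getD i 0) := by rw [← hxa, hgetD i hi']
        have hyb' : b = ρ (h.ext.getD j 0) := by rw [← hyb, hgetD j hj']
        rw [hxa', hyb']
        exact mreach_copy_lift hE'mem hcp hm
    · refine Relation.ReflTransGen.single ⟨e, ?_, ?_⟩
      · rw [hE']
        exact Finset.mem_union_left _ (Finset.mem_erase.mpr ⟨hee, he⟩)
      · obtain ⟨ha, hl⟩ := hold e (Finset.mem_erase.mpr ⟨hee, he⟩)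
        rw [ha, hl]; exact hcase
  · -- backward direction
    intro hxy
    have claim : ∀ x y : ℕ, G.Mreach g' x y →
        ((x ∈ g.V → y ∈ g.V → G.Mreach g x y) ∧
         (∀ a ∈ h.V, x = ρ a → y ∈ g.V →
           ∃ k, k < G.rkN A ∧ G.Mreach h a (h.ext.getD k 0) ∧
             G.Mreach g ((g.att e₀).getD k 0) y)) := by
      intro x y hxy
      have hxy' : Relation.ReflTransGen (G.mstep g') x y := hxy
      clear hxy
      induction hxy' using Relation.ReflTransGen.head_induction_on with
      | refl =>
        constructor
        · intro _ _; exact Relation.ReflTransGen.refl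
        · intro a ha hya hyV
          obtain ⟨k, hk, hka⟩ := hextmem a ha (hya ▸ hyV)
          refine ⟨k, hk, by rw [hka]; exact Relation.ReflTransGen.refl, ?_⟩
          rw [hgetD k hk, hka, ← hya]
          exact Relation.ReflTransGen.refl
      | head hstep htail ih =>
        rename_i x' z'
        obtain ⟨ihl, ihr⟩ := ih
        rcases mstep_replace_cases hE' hold hcp hgV hhV hstep with
          ⟨hxV, hzV, hmg⟩ | ⟨a, ha, b, hb, hxa, hzb, hmh⟩
        · constructor
          · intro _ hyV
            exact Relation.ReflTransGen.head hmg (ihl hzV hyV)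
          · intro a ha hxρ hyV
            obtain ⟨k, hk, hka⟩ := hextmem a ha (hxρ ▸ hxV)
            refine ⟨k, hk, by rw [hka]; exact Relation.ReflTransGen.refl, ?_⟩
            have : (g.att e₀).getD k 0 = x' := by rw [hgetD k hk, hka, ← hxρ]
            rw [this]
            exact Relation.ReflTransGen.head hmg (ihl hzV hyV)
        · constructor
          · intro hxV hyV
            obtain ⟨k₀, hk₀, hka₀⟩ := hextmem a ha (hxa ▸ hxV)
            obtain ⟨k, hk, hmh2, hmg2⟩ := ihr b hb hzb hyV
            have hm1 : G.Mreach h (h.ext.getD k₀ 0) (h.ext.getD k 0) := by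
              rw [hka₀]
              exact Relation.ReflTransGen.head hmh hmh2
            have hsk : G.skRel A k₀ k :=
              (hSk k₀ k).mpr ⟨hk₀, hk, hm1⟩
            have hms : G.mstep g x' ((g.att e₀).getD k 0) := by
              refine ⟨e₀, he₀, Or.inr ⟨A, hA, hlab, k₀, k, ?_, ?_, hsk, ?_, rfl⟩⟩
              · rw [hlen₀]; exact hk₀
              · rw [hlen₀]; exact hk
              · rw [hgetD k₀ hk₀, hka₀, ← hxa]
            exact Relation.ReflTransGen.head hms hmg2
          · intro a' ha' hxρ hyV
            have haa : a' = a := hinj ha' ha (by rw [← hxρ, ← hxa])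
            subst haa
            obtain ⟨k, hk, hmh2, hmg2⟩ := ihr b hb hzb hyV
            exact ⟨k, hk, Relation.ReflTransGen.head hmh hmh2, hmg2⟩
    exact (claim x y hxy).1 hx hy

end HRGrammar
namespace HRGrammar

variable {T : Type}

lemma gwf_replace {G : HRGrammar T} {rkT : T → ℕ} (hWF : G.WF rkT)
    {g g' : HGraph (T ⊕ ℕ)} {e₀ A : ℕ} (hA : A ∈ G.NT)
    (hg : G.GWF rkT g) (hr : IsReplacement g e₀ (G.rhs A) g') :
    G.GWF rkT g' := by
  obtain ⟨ρ, η, hinj, hinjE, hfresh, hmap, hnewE, hV', hE', hold, hcp, hext⟩ := hr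
  have hrhsWF : (G.rhs A).WF (G.rk rkT) := (hWF.2.2.2.1 A hA).1
  intro e he
  rw [hE'] at he
  rcases Finset.mem_union.mp he with he | he
  · obtain ⟨ha, hl⟩ := hold e he
    obtain ⟨h1, h2, h3, h4, h5⟩ := hg e (Finset.mem_of_mem_erase he)
    rw [ha, hl]
    refine ⟨fun v hv => ?_, h2, h3, h4, h5⟩
    rw [hV']
    exact Finset.mem_union_left _ (h1 v hv)
  · obtain ⟨f, hf, rfl⟩ := Finset.mem_image.mp he
    obtain ⟨ha, hl⟩ := hcp f hf
    obtain ⟨h1, h2, h3, h4⟩ := hrhsWF.2.1 f hf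
    rw [ha, hl]
    refine ⟨fun v hv => ?_, ?_, by simpa using h3, by simpa using h4,
      fun B hB => hWF.2.2.2.2.2 A hA f hf B hB⟩
    · obtain ⟨w, hw, rfl⟩ := List.mem_map.mp hv
      rw [hV']
      exact Finset.mem_union_right _ (Finset.mem_image_of_mem ρ (h1 w hw))
    · exact h2.map_on fun a haa b hbb hab =>
        hinj (h1 a haa) (h1 b hbb) hab

lemma derive_props {G : HRGrammar T} {rkT : T → ℕ} (hWF : G.WF rkT)
    {g g' : HGraph (T ⊕ ℕ)} (hg : G.GWF rkT g) (hd : G.DescOK g)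
    (hD : G.Derive g g') :
    G.GWF rkT g' ∧ G.DescOK g' ∧ g.V ⊆ g'.V ∧
      ∀ x ∈ g.V, ∀ y ∈ g.V, (G.Mreach g x y ↔ G.Mreach g' x y) := by
  obtain ⟨e₀, he₀, A, hA, hlab, hr⟩ := hD
  have hSk : G.SkOK A := hd e₀ he₀ A hlab A Relation.ReflTransGen.refl
  have hmr := mreach_replace hWF hA hSk hg he₀ hlab hr
  have hgwf := gwf_replace hWF hA hg hr
  obtain ⟨ρ, η, hinj, hinjE, hfresh, hmap, hnewE, hV', hE', hold, hcp, hext⟩ := hr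
  refine ⟨hgwf, ?_, ?_, hmr⟩
  · intro e he B hB C hC
    rw [hE'] at he
    rcases Finset.mem_union.mp he with he | he
    · obtain ⟨-, hl⟩ := hold e he
      exact hd e (Finset.mem_of_mem_erase he) B (by rw [← hl]; exact hB) C hC
    · obtain ⟨f, hf, rfl⟩ := Finset.mem_image.mp he
      obtain ⟨-, hl⟩ := hcp f hf
      have hlB : (G.rhs A).lab f = Sum.inr B := by rw [← hl]; exact hB
      have hdep : G.dep A B :=
        ⟨hA, hWF.2.2.2.2.2 A hA f hf B hlB, f, hf, hlB⟩
      exact hd e₀ he₀ A hlab C (Relation.ReflTransGen.head hdep hC)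
  · rw [hV']; exact Finset.subset_union_left

lemma derives_props {G : HRGrammar T} {rkT : T → ℕ} (hWF : G.WF rkT)
    {g h : HGraph (T ⊕ ℕ)} (hg : G.GWF rkT g) (hd : G.DescOK g)
    (hD : Relation.ReflTransGen G.Derive g h) :
    G.GWF rkT h ∧ G.DescOK h ∧ g.V ⊆ h.V ∧
      ∀ x ∈ g.V, ∀ y ∈ g.V, (G.Mreach g x y ↔ G.Mreach h x y) := by
  induction hD with
  | refl => exact ⟨hg, hd, le_refl _, fun x _ y _ => Iff.rfl⟩
  | tail _ hbc ih =>
    obtain ⟨hg1, hd1, hsub1, hiff1⟩ := ih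
    obtain ⟨hg2, hd2, hsub2, hiff2⟩ := derive_props hWF hg1 hd1 hbc
    refine ⟨hg2, hd2, hsub1.trans hsub2, fun x hx y hy => ?_⟩
    exact (hiff1 x hx y hy).trans (hiff2 x (hsub1 hx) y (hsub1 hy))

end HRGrammar
namespace HRGrammar

variable {T : Type}

/-- Progress: a nonterminal edge can always be replaced. -/
lemma progress {G : HRGrammar T} {rkT : T → ℕ} (hWF : G.WF rkT)
    {g : HGraph (T ⊕ ℕ)} {e₀ A : ℕ} (hA : A ∈ G.NT)
    (hg : G.GWF rkT g) (he₀ : e₀ ∈ g.E) (hlab : g.lab e₀ = Sum.inr A) :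
    ∃ g', IsReplacement g e₀ (G.rhs A) g' := by
  classical
  set h := G.rhs A with hh
  have hrhsWF : h.WF (G.rk rkT) := (hWF.2.2.2.1 A hA).1
  have hextlen : h.ext.length = G.rkN A := (hWF.2.2.2.1 A hA).2
  have hextnd : h.ext.Nodup := hrhsWF.2.2.2
  have hlen₀ : (g.att e₀).length = G.rkN A := by
    have := (hg e₀ he₀).2.2.1
    rw [hlab] at this
    simpa [HRGrammar.rk] using this
  have hnd₀ : (g.att e₀).Nodup := (hg e₀ he₀).2.1
  have hv₀ : ∀ v ∈ g.att e₀, v ∈ g.V := (hg e₀ he₀).1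
  set N := g.V.sup id + 1 with hN
  set M := g.E.sup id + 1 with hM
  have hVlt : ∀ v ∈ g.V, v < N := fun v hv =>
    Nat.lt_succ_of_le (Finset.le_sup (f := id) hv)
  have hElt : ∀ e ∈ g.E, e < M := fun e he =>
    Nat.lt_succ_of_le (Finset.le_sup (f := id) he)
  set ρ : ℕ → ℕ := fun v =>
    if v ∈ h.ext then (g.att e₀).getD (h.ext.idxOf v) 0 else N + v with hρ
  set η : ℕ → ℕ := fun e => M + e with hη
  have hρext : ∀ v ∈ h.ext, ρ v = (g.att e₀).getD (h.ext.idxOf v) 0 := by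
    intro v hv; simp only [hρ, if_pos hv]
  have hρextV : ∀ v ∈ h.ext, ρ v ∈ g.V := by
    intro v hv
    rw [hρext v hv]
    refine hv₀ _ (getD_mem ?_)
    rw [hlen₀, ← hextlen]
    exact List.idxOf_lt_length_iff.mpr hv
  have hρnot : ∀ v, v ∉ h.ext → ρ v = N + v := by
    intro v hv; simp only [hρ, if_neg hv]
  refine ⟨⟨g.V ∪ h.V.image ρ, g.E.erase e₀ ∪ h.E.image η,
      fun f => if M ≤ f then (h.att (f - M)).map ρ else g.att f,
      fun f => if M ≤ f then h.lab (f - M) else g.lab f, g.ext⟩,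
    ρ, η, ?_, ?_, ?_, ?_, ?_, rfl, rfl, ?_, ?_, rfl⟩
  · -- InjOn ρ
    intro a ha b hb hab
    by_cases hae : a ∈ h.ext <;> by_cases hbe : b ∈ h.ext
    · rw [hρext a hae, hρext b hbe] at hab
      have hia : h.ext.idxOf a < (g.att e₀).length := by
        rw [hlen₀, ← hextlen]; exact List.idxOf_lt_length_iff.mpr hae
      have hib : h.ext.idxOf b < (g.att e₀).length := by
        rw [hlen₀, ← hextlen]; exact List.idxOf_lt_length_iff.mpr hbe
      rw [List.getD_eq_getElem _ _ hia, List.getD_eq_getElem _ _ hib] at hab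
      have hij := (hnd₀.getElem_inj_iff).mp hab
      have : h.ext.idxOf a < h.ext.length := List.idxOf_lt_length_iff.mpr hae
      have : h.ext.idxOf b < h.ext.length := List.idxOf_lt_length_iff.mpr hbe
      calc a = h.ext[h.ext.idxOf a] := (List.getElem_idxOf ‹_›).symm
        _ = h.ext[h.ext.idxOf b] := by congr 1
        _ = b := List.getElem_idxOf ‹_›
    · exfalso
      have h1 : ρ a < N := hVlt _ (hρextV a hae)
      rw [hρnot b hbe] at hab
      omega
    · exfalso
      have h1 : ρ b < N := hVlt _ (hρextV b hbe)
      rw [hρnot a hae] at hab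
      omega
    · rw [hρnot a hae, hρnot b hbe] at hab; omega
  · -- InjOn η
    intro a _ b _ hab
    simpa [hη] using hab
  · -- freshness
    intro v _ hv hmem
    rw [hρnot v hv] at hmem
    have := hVlt _ hmem
    omega
  · -- ext map
    refine List.ext_getElem (by simp [hextlen, hlen₀]) ?_
    intro k hk1 hk2
    rw [List.getElem_map]
    have hke : k < h.ext.length := by simpa using hk1
    have hmem : h.ext[k] ∈ h.ext := List.getElem_mem hke
    rw [hρext _ hmem, hextnd.idxOf_getElem k hke,
      List.getD_eq_getElem _ _ hk2]
  · -- new edges fresh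
    intro e _ hmem
    have := hElt _ hmem
    simp only [hη] at this
    omega
  · -- old edges keep their data
    intro e he
    have heE : e ∈ g.E := Finset.mem_of_mem_erase he
    have : ¬ M ≤ e := by have := hElt e heE; omega
    simp [this]
  · -- copied edges
    intro e _
    have : M ≤ η e := by simp [hη]
    simp only [if_pos this]
    constructor <;> · congr 1; simp [hη]

end HRGrammar
namespace HRGrammar

variable {T : Type}

lemma meas_lt {G : HRGrammar T} {rkT : T → ℕ} (hWF : G.WF rkT) (hSL : G.SL)
    {g g' : HGraph (T ⊕ ℕ)} {e₀ A : ℕ} (hA : A ∈ G.NT)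
    (he₀ : e₀ ∈ g.E) (hlab : g.lab e₀ = Sum.inr A)
    (hr : IsReplacement g e₀ (G.rhs A) g') : G.meas g' < G.meas g := by
  classical
  obtain ⟨ρ, η, hinj, hinjE, hfresh, hmap, hnewE, hV', hE', hold, hcp, hext⟩ := hr
  set K := G.NT.sup fun B => (G.rhs B).E.card with hK
  have hdisj : Disjoint (g.E.erase e₀) ((G.rhs A).E.image η) := by
    rw [Finset.disjoint_right]
    intro x hx hx'
    obtain ⟨f, hf, rfl⟩ := Finset.mem_image.mp hx
    exact hnewE f hf (Finset.mem_of_mem_erase hx')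
  have hsum : G.meas g' =
      (∑ e ∈ g.E.erase e₀, G.wt (g.lab e)) +
        ∑ f ∈ (G.rhs A).E, G.wt ((G.rhs A).lab f) := by
    rw [meas, hE', Finset.sum_union hdisj]
    congr 1
    · exact Finset.sum_congr rfl fun e he => by rw [(hold e he).2]
    · rw [Finset.sum_image (fun a ha b hb hab => hinjE ha hb hab)]
      exact Finset.sum_congr rfl fun f hf => by rw [(hcp f hf).2]
  have hnew_le : ∀ f ∈ (G.rhs A).E,
      G.wt ((G.rhs A).lab f) ≤ (K + 1) ^ G.ht A := by
    intro f hf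
    rcases hl : (G.rhs A).lab f with a | C
    · simp [wt]
    · have hC : C ∈ G.NT := hWF.2.2.2.2.2 A hA f hf C hl
      have hdep : G.dep A C := ⟨hA, hC, f, hf, hl⟩
      have hht : G.ht C < G.ht A := ht_lt_of_dep hSL hdep
      have : G.ht C + 1 ≤ G.ht A := hht
      calc G.wt (Sum.inr C) = (K + 1) ^ (G.ht C + 1) := rfl
        _ ≤ (K + 1) ^ G.ht A := Nat.pow_le_pow_right (Nat.succ_le_succ (Nat.zero_le _)) this
  have hcard : (G.rhs A).E.card ≤ K := Finset.le_sup (f := fun B => (G.rhs B).E.card) hA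
  have hnewsum : (∑ f ∈ (G.rhs A).E, G.wt ((G.rhs A).lab f)) ≤ K * (K + 1) ^ G.ht A := by
    calc (∑ f ∈ (G.rhs A).E, G.wt ((G.rhs A).lab f))
        ≤ ∑ _f ∈ (G.rhs A).E, (K + 1) ^ G.ht A := Finset.sum_le_sum hnew_le
      _ = (G.rhs A).E.card * (K + 1) ^ G.ht A := by rw [Finset.sum_const, smul_eq_mul]
      _ ≤ K * (K + 1) ^ G.ht A := Nat.mul_le_mul_right _ hcard
  have hwt0 : G.wt (g.lab e₀) = (K + 1) ^ (G.ht A + 1) := by rw [hlab]; rfl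
  have hmeasg : G.meas g = (∑ e ∈ g.E.erase e₀, G.wt (g.lab e)) + G.wt (g.lab e₀) :=
    (Finset.sum_erase_add _ _ he₀).symm
  rw [hsum, hmeasg, hwt0]
  have : K * (K + 1) ^ G.ht A < (K + 1) ^ (G.ht A + 1) := by
    rw [pow_succ, mul_comm ((K+1) ^ G.ht A) (K+1)]
    have hpos : 0 < (K + 1) ^ G.ht A := by positivity
    exact Nat.mul_lt_mul_of_lt_of_le (Nat.lt_succ_self K) (le_refl _) hpos
  omega

lemma terminates_aux {G : HRGrammar T} {rkT : T → ℕ} (hWF : G.WF rkT) (hSL : G.SL) :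
    ∀ n : ℕ, ∀ g : HGraph (T ⊕ ℕ), G.meas g ≤ n → G.GWF rkT g →
      ∃ h, Relation.ReflTransGen G.Derive g h ∧ Terminal h := by
  intro n
  induction n using Nat.strong_induction_on with
  | _ n ih =>
    intro g hm hg
    by_cases hnt : ∃ e ∈ g.E, ∃ B : ℕ, g.lab e = Sum.inr B
    · obtain ⟨e, he, B, hB⟩ := hnt
      have hBNT : B ∈ G.NT := (hg e he).2.2.2.2 B hB
      obtain ⟨g', hr⟩ := progress hWF hBNT hg he hB
      have hlt : G.meas g' < G.meas g := meas_lt hWF hSL hBNT he hB hr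
      have hD : G.Derive g g' := ⟨e, he, B, hBNT, hB, hr⟩
      have hg' : G.GWF rkT g' := gwf_replace hWF hBNT hg hr
      have hlt' : G.meas g' < n := lt_of_lt_of_le hlt hm
      obtain ⟨h, hrt, hterm⟩ := ih (G.meas g') hlt' g' (le_refl _) hg'
      exact ⟨h, Relation.ReflTransGen.head hD hrt, hterm⟩
    · refine ⟨g, Relation.ReflTransGen.refl, fun e he => ?_⟩
      rcases hl : g.lab e with a | B
      · exact ⟨a, rfl⟩
      · exact absurd ⟨e, he, B, hl⟩ hnt

lemma terminates {G : HRGrammar T} {rkT : T → ℕ} (hWF : G.WF rkT) (hSL : G.SL)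
    {g : HGraph (T ⊕ ℕ)} (hg : G.GWF rkT g) :
    ∃ h, Relation.ReflTransGen G.Derive g h ∧ Terminal h :=
  terminates_aux hWF hSL (G.meas g) g (le_refl _) hg

end HRGrammar
namespace HRGrammar

variable {T : Type}

lemma transGen_of_dep_rtg {G : HRGrammar T} {A C D : ℕ} (h1 : G.dep A C)
    (h2 : Relation.ReflTransGen G.dep C D) : Relation.TransGen G.dep A D := by
  induction h2 with
  | refl => exact Relation.TransGen.single h1
  | tail _ hbc ih => exact ih.tail hbc

lemma gwf_handle {G : HRGrammar T} {rkT : T → ℕ} (hWF : G.WF rkT) {A : ℕ}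
    (hA : A ∈ G.NT) : G.GWF rkT (G.handle A) := by
  intro e he
  have h1 : 1 ≤ G.rkN A := hWF.2.1 A hA
  refine ⟨by simp [handle], by simp [handle, List.nodup_range], ?_, ?_, ?_⟩
  · simp [handle, HRGrammar.rk]
  · simp [handle]
    omega
  · intro B hB
    simp only [handle] at hB
    rw [← Sum.inr_injective hB]
    exact hA

lemma handle_not_terminal {G : HRGrammar T} {A : ℕ} :
    ¬ Terminal (G.handle A) := by
  intro h
  obtain ⟨a, ha⟩ := h 0 (by simp [handle])
  simp [handle] at ha

lemma derive_handle_elim {G : HRGrammar T} {A : ℕ} {g₁ : HGraph (T ⊕ ℕ)}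
    (hd : G.Derive (G.handle A) g₁) :
    IsReplacement (G.handle A) 0 (G.rhs A) g₁ := by
  obtain ⟨e, he, A', hA', hl, hr⟩ := hd
  have he0 : e = 0 := by simpa [handle] using he
  subst he0
  have hAA : A' = A := by
    have : (G.handle A).lab 0 = Sum.inr A := rfl
    rw [this] at hl
    exact Sum.inr_injective hl.symm
  subst hAA
  exact hr

lemma mstep_copy_inv {G : HRGrammar T} {h g₁ : HGraph (T ⊕ ℕ)}
    {ρ η : ℕ → ℕ}
    (hEeq : g₁.E = h.E.image η)
    (hcp : ∀ f ∈ h.E, g₁.att (η f) = (h.att f).map ρ ∧ g₁.lab (η f) = h.lab f)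
    (hhV : ∀ f ∈ h.E, ∀ v ∈ h.att f, v ∈ h.V)
    {x z : ℕ} (hs : G.mstep g₁ x z) :
    ∃ a ∈ h.V, ∃ b ∈ h.V, x = ρ a ∧ z = ρ b ∧ G.mstep h a b := by
  obtain ⟨f, hf, hcase⟩ := hs
  rw [hEeq] at hf
  obtain ⟨f₀, hf₀, rfl⟩ := Finset.mem_image.mp hf
  obtain ⟨hatt, hlab⟩ := hcp f₀ hf₀
  rw [hatt, hlab] at hcase
  rcases hcase with ⟨⟨t0, ht0⟩, hx, hy⟩ | ⟨A, hANT, hA, i, j, hi, hj, hsk, hx, hy⟩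
  · rw [List.head?_map] at hx
    obtain ⟨a, ha, rfl⟩ := Option.map_eq_some_iff.mp hx
    rw [← List.map_tail] at hy
    obtain ⟨b, hb, rfl⟩ := List.mem_map.mp hy
    exact ⟨a, hhV f₀ hf₀ a (List.mem_of_mem_head? ha), b,
      hhV f₀ hf₀ b (List.mem_of_mem_tail hb), rfl, rfl,
      f₀, hf₀, Or.inl ⟨⟨t0, ht0⟩, ha, hb⟩⟩
  · rw [List.length_map] at hi hj
    rw [getD_map hi] at hx
    rw [getD_map hj] at hy
    exact ⟨_, hhV f₀ hf₀ _ (getD_mem hi), _, hhV f₀ hf₀ _ (getD_mem hj),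
      hx.symm, hy.symm, f₀, hf₀, Or.inr ⟨A, hANT, hA, i, j, hi, hj, hsk, rfl, rfl⟩⟩

/-- Reachability in the first-step graph agrees with reachability between
external nodes of `rhs A`. -/
lemma mreach_handle_iff {G : HRGrammar T} {rkT : T → ℕ} (hWF : G.WF rkT)
    {A : ℕ} (hA : A ∈ G.NT) {g₁ : HGraph (T ⊕ ℕ)}
    (hr : IsReplacement (G.handle A) 0 (G.rhs A) g₁) :
    ∀ i < G.rkN A, ∀ j < G.rkN A,
      (G.Mreach (G.rhs A) ((G.rhs A).ext.getD i 0) ((G.rhs A).ext.getD j 0) ↔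
        G.Mreach g₁ i j) := by
  obtain ⟨ρ, η, hinj, hinjE, hfresh, hmap, hnewE, hV', hE', hold, hcp, hext⟩ := hr
  set h := G.rhs A with hh
  have hrhsWF : h.WF (G.rk rkT) := (hWF.2.2.2.1 A hA).1
  have hextlen : h.ext.length = G.rkN A := (hWF.2.2.2.1 A hA).2
  have hhV : ∀ f ∈ h.E, ∀ v ∈ h.att f, v ∈ h.V := fun f hf => (hrhsWF.2.1 f hf).1
  have hextV : ∀ v ∈ h.ext, v ∈ h.V := hrhsWF.2.2.1
  have hEeq : g₁.E = h.E.image η := by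
    rw [hE']
    have : (G.handle A).E.erase 0 = ∅ := by
      simp [handle]
    rw [this, Finset.empty_union]
  have hE'mem : ∀ f ∈ h.E, η f ∈ g₁.E := by
    intro f hf; rw [hEeq]; exact Finset.mem_image_of_mem η hf
  have hρext : ∀ k < G.rkN A, ρ (h.ext.getD k 0) = k := by
    intro k hk
    have hkl : k < h.ext.length := by rw [hextlen]; exact hk
    have : (h.ext.map ρ).getD k 0 = ρ (h.ext.getD k 0) := getD_map hkl
    rw [hmap] at this
    rw [← this]
    have hatt : (G.handle A).att 0 = List.range (G.rkN A) := rfl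
    rw [hatt, List.getD_eq_getElem _ _ (by simpa using hk), List.getElem_range]
  have hextDV : ∀ k < G.rkN A, h.ext.getD k 0 ∈ h.V := by
    intro k hk
    exact hextV _ (getD_mem (by rw [hextlen]; exact hk))
  intro i hi j hj
  constructor
  · intro hm
    have := mreach_copy_lift (G := G) hE'mem hcp hm
    rwa [hρext i hi, hρext j hj] at this
  · intro hm
    have claim : ∀ x y : ℕ, G.Mreach g₁ x y → ∀ a ∈ h.V, x = ρ a →
        ∀ b ∈ h.V, y = ρ b → G.Mreach h a b := by
      intro x y hxy
      have hxy' : Relation.ReflTransGen (G.mstep g₁) x y := hxy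
      clear hxy
      induction hxy' using Relation.ReflTransGen.head_induction_on with
      | refl =>
        intro a ha hxa b hb hxb
        have : a = b := hinj ha hb (by rw [← hxa, ← hxb])
        rw [this]
        exact Relation.ReflTransGen.refl
      | head hstep htail ih =>
        intro a ha hxa b hb hyb
        obtain ⟨a', ha', b', hb', hxa', hzb', hmh⟩ :=
          mstep_copy_inv hEeq hcp hhV hstep
        have haa : a' = a := hinj ha' ha (by rw [← hxa', ← hxa])
        subst haa
        exact Relation.ReflTransGen.head hmh (ih b' hb' hzb' b hb hyb)
    have h1 := claim i j hm _ (hextDV i hi) (hρext i hi).symm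
      _ (hextDV j hj) (hρext j hj).symm
    exact h1

lemma descOK_first {G : HRGrammar T} {rkT : T → ℕ} (hWF : G.WF rkT) (hSL : G.SL)
    {A : ℕ} (hA : A ∈ G.NT)
    (hIH : ∀ C ∈ G.NT, G.ht C < G.ht A → G.SkOK C)
    {g₁ : HGraph (T ⊕ ℕ)}
    (hr : IsReplacement (G.handle A) 0 (G.rhs A) g₁) : G.DescOK g₁ := by
  obtain ⟨ρ, η, hinj, hinjE, hfresh, hmap, hnewE, hV', hE', hold, hcp, hext⟩ := hr
  intro e he B hB C hC
  rw [hE'] at he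
  rcases Finset.mem_union.mp he with he | he
  · rw [show (G.handle A).E.erase 0 = ∅ by simp [handle]] at he
    exact absurd he (Finset.notMem_empty e)
  · obtain ⟨f, hf, rfl⟩ := Finset.mem_image.mp he
    obtain ⟨-, hl⟩ := hcp f hf
    have hlB : (G.rhs A).lab f = Sum.inr B := by rw [← hl]; exact hB
    have hBNT : B ∈ G.NT := hWF.2.2.2.2.2 A hA f hf B hlB
    have hdep : G.dep A B := ⟨hA, hBNT, f, hf, hlB⟩
    have htg : Relation.TransGen G.dep A C := transGen_of_dep_rtg hdep hC
    exact hIH C (nt_closed hC hBNT) (ht_lt_of_transGen hSL htg)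

end HRGrammar
namespace HRGrammar

variable {T : Type}

lemma handle_repl_mem {G : HRGrammar T} {A : ℕ} {g₁ : HGraph (T ⊕ ℕ)}
    (hr : IsReplacement (G.handle A) 0 (G.rhs A) g₁) :
    ∀ k < G.rkN A, k ∈ g₁.V := by
  obtain ⟨ρ, η, -, -, -, -, -, hV', -, -, -, -⟩ := hr
  intro k hk
  rw [hV']
  exact Finset.mem_union_left _ (by simp [handle, hk])

lemma skOK_all {G : HRGrammar T} {rkT : T → ℕ} (hWF : G.WF rkT) (hSL : G.SL) :
    ∀ A ∈ G.NT, G.SkOK A := by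
  suffices H : ∀ n, ∀ A ∈ G.NT, G.ht A < n → G.SkOK A from
    fun A hA => H (G.ht A + 1) A hA (Nat.lt_succ_self _)
  intro n
  induction n with
  | zero => intro A _ hn; exact absurd hn (Nat.not_lt_zero _)
  | succ n ih =>
    intro A hA hht
    have hIH : ∀ C ∈ G.NT, G.ht C < G.ht A → G.SkOK C := fun C hC hlt =>
      ih C hC (by omega)
    intro i j
    constructor
    · rintro ⟨hi, hj, h, hder, hterm, hreach⟩
      rcases Relation.ReflTransGen.cases_head hder with heq | ⟨g₁, hd1, hrest⟩
      · exact absurd (heq ▸ hterm) handle_not_terminal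
      · have hr := derive_handle_elim hd1
        have hg₁ := gwf_replace hWF hA (gwf_handle hWF hA) hr
        have hdesc₁ := descOK_first hWF hSL hA hIH hr
        have hmemi : i ∈ g₁.V := handle_repl_mem hr i hi
        have hmemj : j ∈ g₁.V := handle_repl_mem hr j hj
        have hiff := (derives_props hWF hg₁ hdesc₁ hrest).2.2.2 i hmemi j hmemj
        have hm1 : G.Mreach h i j := (mreach_of_terminal hterm).mpr hreach
        have hm0 : G.Mreach g₁ i j := hiff.mpr hm1
        exact ⟨hi, hj, (mreach_handle_iff hWF hA hr i hi j hj).mpr hm0⟩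
    · rintro ⟨hi, hj, hm⟩
      have hgh := gwf_handle hWF hA
      have he0 : (0:ℕ) ∈ (G.handle A).E := by simp [handle]
      have hlab0 : (G.handle A).lab 0 = Sum.inr A := rfl
      obtain ⟨g₁, hr⟩ := progress hWF hA hgh he0 hlab0
      have hd1 : G.Derive (G.handle A) g₁ := ⟨0, he0, A, hA, hlab0, hr⟩
      have hg₁ := gwf_replace hWF hA hgh hr
      have hdesc₁ := descOK_first hWF hSL hA hIH hr
      obtain ⟨hfin, hrt, hterm⟩ := terminates hWF hSL hg₁
      have hmemi : i ∈ g₁.V := handle_repl_mem hr i hi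
      have hmemj : j ∈ g₁.V := handle_repl_mem hr j hj
      have hm0 : G.Mreach g₁ i j := (mreach_handle_iff hWF hA hr i hi j hj).mp hm
      have hiff := (derives_props hWF hg₁ hdesc₁ hrt).2.2.2 i hmemi j hmemj
      exact ⟨hi, hj, hfin, Relation.ReflTransGen.head hd1 hrt, hterm,
        (mreach_of_terminal hterm).mp (hiff.mp hm0)⟩

end HRGrammar
namespace HRGrammar

variable {T : Type}

lemma startSk_step_iff {G : HRGrammar T} {rkT : T → ℕ} (hWF : G.WF rkT)
    (ℓ : T ⊕ ℕ) {x y : ℕ} :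
    (G.startSk ℓ).step x y ↔ G.mstep G.S x y := by
  classical
  constructor
  · rintro ⟨k, hk, hx, hy⟩
    rcases Finset.mem_union.mp hk with hk | hk
    · obtain ⟨e, he, rfl⟩ := Finset.mem_image.mp hk
      obtain ⟨heS, hlab⟩ := Finset.mem_filter.mp he
      have hmod : (2 * e) % 2 = 0 := by omega
      have hdiv : (2 * e) / 2 = e := by omega
      simp only [startSk, hmod, if_pos, hdiv] at hx hy
      rcases hl : G.S.lab e with a | B
      · exact ⟨e, heS, Or.inl ⟨⟨a, hl⟩, hx, hy⟩⟩
      · exact absurd hl (hlab B (hWF.2.2.2.2.1 e heS B hl))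
    · obtain ⟨⟨e, i, j⟩, hp, rfl⟩ := Finset.mem_image.mp hk
      obtain ⟨hmemp, A, hANT, hlabA, hsk⟩ := Finset.mem_filter.mp hp
      have heS : e ∈ G.S.E := (Finset.mem_product.mp hmemp).1
      set m := Nat.pair e (Nat.pair i j) with hm
      have hmod : (2 * m + 1) % 2 ≠ 0 := by omega
      have hdiv : (2 * m + 1 - 1) / 2 = m := by omega
      have hup : (Nat.unpair m).1 = e := by rw [hm, Nat.unpair_pair]
      have hup2 : (Nat.unpair (Nat.unpair m).2).1 = i := by
        rw [hm, Nat.unpair_pair]; simp [Nat.unpair_pair]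
      have hup3 : (Nat.unpair (Nat.unpair m).2).2 = j := by
        rw [hm, Nat.unpair_pair]; simp [Nat.unpair_pair]
      have hatt : (G.startSk ℓ).att (2 * m + 1) =
          [(G.S.att e).getD i 0, (G.S.att e).getD j 0] := by
        simp only [startSk, if_neg hmod, hdiv, hup, hup2, hup3]
      rw [hatt] at hx hy
      have hxv : x = (G.S.att e).getD i 0 := by simpa using hx.symm
      have hyv : y = (G.S.att e).getD j 0 := by simpa using hy
      have hlen : (G.S.att e).length = G.rkN A := by
        have := (hWF.2.2.1.2.1 e heS).2.2.1
        rw [hlabA] at this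
        simpa [HRGrammar.rk] using this
      exact ⟨e, heS, Or.inr ⟨A, hANT, hlabA, i, j,
        by rw [hlen]; exact hsk.1, by rw [hlen]; exact hsk.2.1, hsk,
        hxv.symm, hyv.symm⟩⟩
  · rintro ⟨e, he, ⟨⟨a, ha⟩, hx, hy⟩ | ⟨A, hANT, hA, i, j, hi, hj, hsk, hx, hy⟩⟩
    · refine ⟨2 * e, ?_, ?_, ?_⟩
      · refine Finset.mem_union_left _ (Finset.mem_image_of_mem _ ?_)
        refine Finset.mem_filter.mpr ⟨he, fun B _ hcon => ?_⟩
        rw [ha] at hcon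
        exact absurd hcon (by simp)
      · have hmod : (2 * e) % 2 = 0 := by omega
        have hdiv : (2 * e) / 2 = e := by omega
        simp only [startSk, if_pos hmod, hdiv]
        exact hx
      · have hmod : (2 * e) % 2 = 0 := by omega
        have hdiv : (2 * e) / 2 = e := by omega
        simp only [startSk, if_pos hmod, hdiv]
        exact hy
    · set m := Nat.pair e (Nat.pair i j) with hm
      have hmod : (2 * m + 1) % 2 ≠ 0 := by omega
      have hdiv : (2 * m + 1 - 1) / 2 = m := by omega
      have hup : (Nat.unpair m).1 = e := by rw [hm, Nat.unpair_pair]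
      have hup2 : (Nat.unpair (Nat.unpair m).2).1 = i := by
        rw [hm, Nat.unpair_pair]; simp [Nat.unpair_pair]
      have hup3 : (Nat.unpair (Nat.unpair m).2).2 = j := by
        rw [hm, Nat.unpair_pair]; simp [Nat.unpair_pair]
      have hatt : (G.startSk ℓ).att (2 * m + 1) =
          [(G.S.att e).getD i 0, (G.S.att e).getD j 0] := by
        simp only [startSk, if_neg hmod, hdiv, hup, hup2, hup3]
      refine ⟨2 * m + 1, ?_, ?_, ?_⟩
      · refine Finset.mem_union_right _ ?_
        have hsup : i < G.S.E.sup fun e' => (G.S.att e').length :=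
          lt_of_lt_of_le hi (Finset.le_sup (f := fun e' => (G.S.att e').length) he)
        have hsup' : j < G.S.E.sup fun e' => (G.S.att e').length :=
          lt_of_lt_of_le hj (Finset.le_sup (f := fun e' => (G.S.att e').length) he)
        refine Finset.mem_image.mpr ⟨(e, i, j), ?_, rfl⟩
        refine Finset.mem_filter.mpr ⟨?_, A, hANT, hA, hsk⟩
        refine Finset.mem_product.mpr ⟨he, ?_⟩
        exact Finset.mem_product.mpr ⟨Finset.mem_range.mpr hsup, Finset.mem_range.mpr hsup'⟩
      · rw [hatt, hx]; rfl
      · rw [hatt, hy]; simp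

/-- Reachability in `startSk` is `mstep`-reachability in `S`. -/
lemma startSk_reaches_iff {G : HRGrammar T} {rkT : T → ℕ} (hWF : G.WF rkT)
    (ℓ : T ⊕ ℕ) {x y : ℕ} :
    (G.startSk ℓ).Reaches x y ↔ G.Mreach G.S x y := by
  rw [HGraph.reaches_iff_rtg]
  constructor <;> intro hxy <;> induction hxy with
  | refl => exact Relation.ReflTransGen.refl
  | tail _ hbc ih => exact ih.tail (by first
      | exact (startSk_step_iff hWF ℓ).mp hbc
      | exact (startSk_step_iff hWF ℓ).mpr hbc)

end HRGrammar
/-- For all nodes `u, v` of the start graph `S` of an SL-HR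
grammar `G`: `v` is reachable from `u` in `val(G)` iff `v` is reachable from
`u` in the graph `S'` obtained from `S` by replacing every nonterminal edge
by the skeleton of its label. -/
theorem start_skeleton_reachability {T : Type} (rkT : T → ℕ)
    (G : HRGrammar T) (hWF : G.WF rkT) (hSL : G.SL) (ℓ : T ⊕ ℕ)
    (u v : ℕ) (hu : u ∈ G.S.V) (hv : v ∈ G.S.V) :
    ∀ g ∈ G.Lang, (g.Reaches u v ↔ (G.startSk ℓ).Reaches u v) := by
  intro g hg
  obtain ⟨hder, hterm⟩ := hg
  have hgS : G.GWF rkT G.S := by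
    intro e he
    obtain ⟨h1, h2, h3, h4⟩ := hWF.2.2.1.2.1 e he
    exact ⟨h1, h2, h3, h4, fun B hB => hWF.2.2.2.2.1 e he B hB⟩
  have hdescS : G.DescOK G.S := by
    intro e he B hB C hC
    have hBNT : B ∈ G.NT := hWF.2.2.2.2.1 e he B hB
    exact HRGrammar.skOK_all hWF hSL C (HRGrammar.nt_closed hC hBNT)
  have hiff := (HRGrammar.derives_props hWF hgS hdescS hder).2.2.2 u hu v hv
  rw [← HRGrammar.mreach_of_terminal (G := G) hterm, ← hiff,
    HRGrammar.startSk_reaches_iff hWF ℓ]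
end
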